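/- arXiv:0807.3498 — 5 statements merged into one kernel-verified Lean document; each statement's English description precedes it below -/
import Mathlib

section
/- Growth formula for derivatives: Suppose (R̂_k) has linear growth with growth generator R̂#. Then for every multi-index I = (i₁,i₂) there exists a constant C such that for all k ≥ 1, | D_I R_k(X₀) − R#(X₀) · ( i^{|I|} · M₁^{i₁} · M₂^{i₂} / (|I|+1) ) · k^{|I|+1} | ≤ C·k^{|I|}, where i denotes the imaginary unit. -/
open Complex Real Filter

noncomputable section

/-- The trigonometric sum `A(X) = Σ_{V ∈ ℤ²} Â(V) · exp(i X·V)` of a finitely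
supported function `Â : ℤ² → ℤ`. -/
def trigSum (A : ℤ × ℤ → ℤ) (X : ℝ × ℝ) : ℂ :=
  ∑ᶠ V : ℤ × ℤ, (A V : ℂ) *
    Complex.exp (Complex.I * ((X.1 * (V.1 : ℝ) + X.2 * (V.2 : ℝ) : ℝ) : ℂ))

/-- First partial derivative `∂/∂x₁` of a complex-valued function on `ℝ²`. -/
def pd1 (f : ℝ × ℝ → ℂ) : ℝ × ℝ → ℂ := fun x => deriv (fun t => f (t, x.2)) x.1

/-- Second partial derivative `∂/∂x₂` of a complex-valued function on `ℝ²`. -/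
def pd2 (f : ℝ × ℝ → ℂ) : ℝ × ℝ → ℂ := fun x => deriv (fun t => f (x.1, t)) x.2

/-- The mixed partial derivative `D_I = ∂^{|I|}/∂x₁^{i₁}∂x₂^{i₂}` for the
multi-index `I = (i₁, i₂)` (complex-valued functions). -/
def DI (i₁ i₂ : ℕ) (f : ℝ × ℝ → ℂ) : ℝ × ℝ → ℂ := pd1^[i₁] (pd2^[i₂] f)

/-- First partial derivative `∂/∂x₁` of a real-valued function on `ℝ²`. -/
def pd1R (f : ℝ × ℝ → ℝ) : ℝ × ℝ → ℝ := fun x => deriv (fun t => f (t, x.2)) x.1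

/-- Second partial derivative `∂/∂x₂` of a real-valued function on `ℝ²`. -/
def pd2R (f : ℝ × ℝ → ℝ) : ℝ × ℝ → ℝ := fun x => deriv (fun t => f (x.1, t)) x.2

/-- The mixed partial derivative `D_I = ∂^{|I|}/∂x₁^{i₁}∂x₂^{i₂}` for the
multi-index `I = (i₁, i₂)` (real-valued functions). -/
def DIR (i₁ i₂ : ℕ) (f : ℝ × ℝ → ℝ) : ℝ × ℝ → ℝ := pd1R^[i₁] (pd2R^[i₂] f)

/-- `(R̂_k)` has linear growth with growth generator `R̂#`:
`R̂_{k+1}(V) = R̂_k(V) + R̂#(V − k·(M₁,M₂))`. -/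
def LinearGrowth (M₁ M₂ : ℤ) (Rhat : ℕ → ℤ × ℤ → ℤ) (Rsharp : ℤ × ℤ → ℤ) : Prop :=
  ∀ (k : ℕ) (V : ℤ × ℤ),
    Rhat (k + 1) V = Rhat k V + Rsharp (V.1 - (k : ℤ) * M₁, V.2 - (k : ℤ) * M₂)

namespace GrowthAux

/-- canonical factored form of the exponential term -/
def ee (V : ℤ × ℤ) (X : ℝ × ℝ) : ℂ :=
  Complex.exp (Complex.I * V.1 * X.1) * Complex.exp (Complex.I * V.2 * X.2)

lemma hasDerivAt_ofReal (t : ℝ) : HasDerivAt (fun s : ℝ => (s : ℂ)) 1 t := by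
  simpa using (hasDerivAt_id t).ofReal_comp

lemma hasDerivAt_cexp_mul (a : ℂ) (t : ℝ) :
    HasDerivAt (fun s : ℝ => Complex.exp (a * s)) (a * Complex.exp (a * t)) t := by
  have h := ((hasDerivAt_ofReal t).const_mul a).cexp
  simpa [mul_comm] using h

/-- finite trigonometric sums with complex coefficients -/
def TS (S : Finset (ℤ × ℤ)) (c : ℤ × ℤ → ℂ) : ℝ × ℝ → ℂ :=
  fun X => ∑ V ∈ S, c V * ee V X

lemma pd1_TS (S : Finset (ℤ × ℤ)) (c : ℤ × ℤ → ℂ) :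
    pd1 (TS S c) = TS S (fun V => c V * (Complex.I * V.1)) := by
  funext x
  have h : HasDerivAt (fun t : ℝ => TS S c (t, x.2))
      (∑ V ∈ S, c V * (Complex.I * V.1) * ee V x) x.1 := by
    have h2 : ∀ V ∈ S, HasDerivAt
        (fun t : ℝ => c V * (Complex.exp (Complex.I * V.1 * t) *
          Complex.exp (Complex.I * V.2 * x.2)))
        (c V * (Complex.I * V.1) * ee V x) x.1 := by
      intro V _
      have h3 := ((hasDerivAt_cexp_mul (Complex.I * V.1) x.1).mul_const
          (Complex.exp (Complex.I * V.2 * x.2))).const_mul (c V)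
      refine h3.congr_deriv ?_
      unfold ee; ring
    exact HasDerivAt.fun_sum h2
  exact h.deriv

lemma pd2_TS (S : Finset (ℤ × ℤ)) (c : ℤ × ℤ → ℂ) :
    pd2 (TS S c) = TS S (fun V => c V * (Complex.I * V.2)) := by
  funext x
  have h : HasDerivAt (fun t : ℝ => TS S c (x.1, t))
      (∑ V ∈ S, c V * (Complex.I * V.2) * ee V x) x.2 := by
    have h2 : ∀ V ∈ S, HasDerivAt
        (fun t : ℝ => c V * (Complex.exp (Complex.I * V.1 * x.1) *
          Complex.exp (Complex.I * V.2 * t)))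
        (c V * (Complex.I * V.2) * ee V x) x.2 := by
      intro V _
      have h3 := ((hasDerivAt_cexp_mul (Complex.I * V.2) x.2).const_mul
          (Complex.exp (Complex.I * V.1 * x.1))).const_mul (c V)
      refine h3.congr_deriv ?_
      unfold ee; ring
    exact HasDerivAt.fun_sum h2
  exact h.deriv

lemma pd2_iter_TS (S : Finset (ℤ × ℤ)) (m : ℕ) :
    ∀ c : ℤ × ℤ → ℂ, pd2^[m] (TS S c) = TS S (fun V => c V * (Complex.I * V.2) ^ m) := by
  induction m with
  | zero =>
    intro c; simp only [Function.iterate_zero, id_eq, pow_zero]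
    unfold TS; funext x; exact Finset.sum_congr rfl fun V _ => by ring_nf
  | succ m ih =>
    intro c
    rw [Function.iterate_succ_apply, pd2_TS, ih]
    unfold TS; funext x
    exact Finset.sum_congr rfl fun V _ => by ring

lemma pd1_iter_TS (S : Finset (ℤ × ℤ)) (m : ℕ) :
    ∀ c : ℤ × ℤ → ℂ, pd1^[m] (TS S c) = TS S (fun V => c V * (Complex.I * V.1) ^ m) := by
  induction m with
  | zero =>
    intro c; simp only [Function.iterate_zero, id_eq, pow_zero]
    unfold TS; funext x; exact Finset.sum_congr rfl fun V _ => by ring_nf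
  | succ m ih =>
    intro c
    rw [Function.iterate_succ_apply, pd1_TS, ih]
    unfold TS; funext x
    exact Finset.sum_congr rfl fun V _ => by ring

lemma DI_TS (i₁ i₂ : ℕ) (S : Finset (ℤ × ℤ)) (c : ℤ × ℤ → ℂ) :
    DI i₁ i₂ (TS S c) =
      TS S (fun V => c V * (Complex.I * V.1) ^ i₁ * (Complex.I * V.2) ^ i₂) := by
  unfold DI
  rw [pd2_iter_TS, pd1_iter_TS]
  unfold TS; funext x
  exact Finset.sum_congr rfl fun V _ => by ring

lemma trigSum_eq_TS (A : ℤ × ℤ → ℤ) (hA : (Function.support A).Finite) :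
    trigSum A = TS hA.toFinset (fun V => (A V : ℂ)) := by
  funext X
  unfold trigSum TS
  rw [finsum_eq_sum_of_support_subset]
  · refine Finset.sum_congr rfl fun V _ => ?_
    unfold ee
    rw [← Complex.exp_add]; congr 1; push_cast; ring
  · intro V hV
    simp only [Function.mem_support] at hV
    simp only [Finset.coe_sort_coe, Set.Finite.coe_toFinset, Function.mem_support]
    intro h0
    exact hV (by simp [h0])

lemma DI_trigSum_eval (A : ℤ × ℤ → ℤ) (hA : (Function.support A).Finite) (i₁ i₂ : ℕ)
    (X : ℝ × ℝ) :
    DI i₁ i₂ (trigSum A) X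
      = ∑ᶠ V : ℤ × ℤ,
          (A V : ℂ) * (Complex.I * V.1) ^ i₁ * (Complex.I * V.2) ^ i₂ * ee V X := by
  have hsub : Function.support
      (fun V : ℤ × ℤ =>
        (A V : ℂ) * (Complex.I * V.1) ^ i₁ * (Complex.I * V.2) ^ i₂ * ee V X)
      ⊆ ↑hA.toFinset := by
    intro V hV
    simp only [Function.mem_support] at hV
    simp only [Finset.coe_sort_coe, Set.Finite.coe_toFinset, Function.mem_support]
    intro h0
    exact hV (by simp [h0])
  rw [trigSum_eq_TS A hA, DI_TS, finsum_eq_sum_of_support_subset _ hsub]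
  rfl

lemma abs_ee (V : ℤ × ℤ) (X : ℝ × ℝ) : ‖ee V X‖ = 1 := by
  unfold ee
  rw [norm_mul, Complex.norm_exp, Complex.norm_exp]
  simp [Complex.mul_re]

lemma ee_shift (M₁ M₂ : ℤ) (X₀ : ℝ × ℝ) (m : ℤ)
    (hm : X₀.1 * (M₁ : ℝ) + X₀.2 * (M₂ : ℝ) = 2 * Real.pi * (m : ℝ))
    (W : ℤ × ℤ) (k : ℕ) :
    ee (W.1 + (k : ℤ) * M₁, W.2 + (k : ℤ) * M₂) X₀ = ee W X₀ := by
  have hmC : (X₀.1 : ℂ) * (M₁ : ℂ) + (X₀.2 : ℂ) * (M₂ : ℂ)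
      = 2 * (Real.pi : ℂ) * (m : ℂ) := by exact_mod_cast congrArg Complex.ofReal hm
  have h1 : ee (W.1 + (k : ℤ) * M₁, W.2 + (k : ℤ) * M₂) X₀
      = ee W X₀ * Complex.exp (((k * m : ℤ) : ℂ) * (2 * (Real.pi : ℂ) * Complex.I)) := by
    unfold ee
    rw [← Complex.exp_add, ← Complex.exp_add, ← Complex.exp_add]
    congr 1
    push_cast
    linear_combination (Complex.I * (k : ℂ)) * hmC
  rw [h1, Complex.exp_int_mul_two_pi_mul_I, mul_one]

lemma sum_pow_le (d k : ℕ) : ∑ j ∈ Finset.range k, (j : ℝ) ^ d ≤ (k : ℝ) ^ (d + 1) := by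
  calc ∑ j ∈ Finset.range k, (j : ℝ) ^ d ≤ ∑ _j ∈ Finset.range k, (k : ℝ) ^ d := by
        refine Finset.sum_le_sum fun j hj => ?_
        exact pow_le_pow_left₀ (by positivity) (by exact_mod_cast (Finset.mem_range.mp hj).le) d
    _ = (k : ℝ) * (k : ℝ) ^ d := by simp [mul_comm]
    _ = (k : ℝ) ^ (d + 1) := by ring

lemma pow_succ_sub_bounds (x : ℝ) (hx : 0 ≤ x) (n : ℕ) :
    ((n : ℝ) + 1) * x ^ n ≤ (x + 1) ^ (n + 1) - x ^ (n + 1) ∧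
    (x + 1) ^ (n + 1) - x ^ (n + 1) ≤ ((n : ℝ) + 1) * (x + 1) ^ n := by
  have hid : (x + 1) ^ (n + 1) - x ^ (n + 1)
      = ∑ i ∈ Finset.range (n + 1), (x + 1) ^ i * x ^ (n - i) := by
    have h := geom_sum₂_mul (x + 1) x (n + 1)
    rw [show (x + 1) - x = 1 by ring, mul_one] at h
    rw [← h]
    exact Finset.sum_congr rfl fun i _ => by norm_num
  constructor
  · rw [hid]
    have hterm : ∀ i ∈ Finset.range (n + 1), x ^ n ≤ (x + 1) ^ i * x ^ (n - i) := by
      intro i hi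
      have hi' : i ≤ n := Nat.lt_succ_iff.mp (Finset.mem_range.mp hi)
      calc x ^ n = x ^ i * x ^ (n - i) := by rw [← pow_add]; congr 1; omega
        _ ≤ (x + 1) ^ i * x ^ (n - i) :=
          mul_le_mul_of_nonneg_right (pow_le_pow_left₀ hx (by linarith) i) (pow_nonneg hx _)
    calc ((n : ℝ) + 1) * x ^ n = ∑ _i ∈ Finset.range (n + 1), x ^ n := by
          simp [mul_comm]
      _ ≤ _ := Finset.sum_le_sum hterm
  · rw [hid]
    have hterm : ∀ i ∈ Finset.range (n + 1), (x + 1) ^ i * x ^ (n - i) ≤ (x + 1) ^ n := by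
      intro i hi
      have hi' : i ≤ n := Nat.lt_succ_iff.mp (Finset.mem_range.mp hi)
      calc (x + 1) ^ i * x ^ (n - i) ≤ (x + 1) ^ i * (x + 1) ^ (n - i) :=
            mul_le_mul_of_nonneg_left (pow_le_pow_left₀ hx (by linarith) _) (by positivity)
        _ = (x + 1) ^ n := by rw [← pow_add]; congr 1; omega
    calc (∑ i ∈ Finset.range (n + 1), (x + 1) ^ i * x ^ (n - i))
        ≤ ∑ _i ∈ Finset.range (n + 1), (x + 1) ^ n := Finset.sum_le_sum hterm
      _ = ((n : ℝ) + 1) * (x + 1) ^ n := by simp [mul_comm]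

lemma factA (n : ℕ) (k : ℕ) :
    0 ≤ (k : ℝ) ^ (n + 1) / ((n : ℝ) + 1) - ∑ j ∈ Finset.range k, (j : ℝ) ^ n ∧
    (k : ℝ) ^ (n + 1) / ((n : ℝ) + 1) - ∑ j ∈ Finset.range k, (j : ℝ) ^ n ≤ (k : ℝ) ^ n := by
  have hn : (0 : ℝ) < (n : ℝ) + 1 := by positivity
  induction k with
  | zero =>
    constructor
    · simp
    · simp
  | succ k ih =>
    have hb := pow_succ_sub_bounds (k : ℝ) (Nat.cast_nonneg k) n
    have hD1 : (k : ℝ) ^ n ≤ (((k : ℝ) + 1) ^ (n + 1) - (k : ℝ) ^ (n + 1)) / ((n : ℝ) + 1) :=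
      (le_div_iff₀ hn).mpr (by linarith [hb.1])
    have hD2 : (((k : ℝ) + 1) ^ (n + 1) - (k : ℝ) ^ (n + 1)) / ((n : ℝ) + 1) ≤ ((k : ℝ) + 1) ^ n :=
      (div_le_iff₀ hn).mpr (by linarith [hb.2])
    have hsplit : ((k : ℝ) + 1) ^ (n + 1) / ((n : ℝ) + 1)
        = (k : ℝ) ^ (n + 1) / ((n : ℝ) + 1)
          + (((k : ℝ) + 1) ^ (n + 1) - (k : ℝ) ^ (n + 1)) / ((n : ℝ) + 1) := by
      field_simp; ring
    rw [Finset.sum_range_succ]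
    push_cast
    constructor
    · linarith [ih.1]
    · linarith [ih.2]

lemma keybound (a b m₁ m₂ : ℝ) (i₁ i₂ : ℕ) :
    ∃ C : ℝ, ∀ k : ℕ, 1 ≤ k →
      |(∑ j ∈ Finset.range k, (a + (j : ℝ) * m₁) ^ i₁ * (b + (j : ℝ) * m₂) ^ i₂)
          - m₁ ^ i₁ * m₂ ^ i₂ * (k : ℝ) ^ (i₁ + i₂ + 1) / ((i₁ : ℝ) + (i₂ : ℝ) + 1)|
        ≤ C * (k : ℝ) ^ (i₁ + i₂) := by
  classical
  set n := i₁ + i₂ with hn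
  set P : Finset (ℕ × ℕ) := Finset.range (i₁ + 1) ×ˢ Finset.range (i₂ + 1) with hP
  set co : ℕ × ℕ → ℝ := fun p =>
    a ^ p.1 * m₁ ^ (i₁ - p.1) * (i₁.choose p.1 : ℝ) *
    (b ^ p.2 * m₂ ^ (i₂ - p.2) * (i₂.choose p.2 : ℝ)) with hco
  set dg : ℕ × ℕ → ℕ := fun p => (i₁ - p.1) + (i₂ - p.2) with hdg
  have h00 : (0, 0) ∈ P := by simp [hP]
  have hexp : ∀ j : ℕ, (a + (j : ℝ) * m₁) ^ i₁ * (b + (j : ℝ) * m₂) ^ i₂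
      = ∑ p ∈ P, co p * (j : ℝ) ^ dg p := by
    intro j
    rw [add_pow, add_pow, Finset.sum_mul_sum, hP, Finset.sum_product]
    refine Finset.sum_congr rfl fun s _ => Finset.sum_congr rfl fun t _ => ?_
    simp only [hco, hdg, mul_pow]
    ring
  refine ⟨|m₁ ^ i₁ * m₂ ^ i₂| + ∑ p ∈ P.erase (0, 0), |co p|, fun k hk => ?_⟩
  have hk1 : (1 : ℝ) ≤ (k : ℝ) := by exact_mod_cast hk
  have hsum : (∑ j ∈ Finset.range k, (a + (j : ℝ) * m₁) ^ i₁ * (b + (j : ℝ) * m₂) ^ i₂)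
      = m₁ ^ i₁ * m₂ ^ i₂ * (∑ j ∈ Finset.range k, (j : ℝ) ^ n)
        + ∑ p ∈ P.erase (0, 0), co p * ∑ j ∈ Finset.range k, (j : ℝ) ^ dg p := by
    calc (∑ j ∈ Finset.range k, (a + (j : ℝ) * m₁) ^ i₁ * (b + (j : ℝ) * m₂) ^ i₂)
        = ∑ j ∈ Finset.range k, ∑ p ∈ P, co p * (j : ℝ) ^ dg p :=
          Finset.sum_congr rfl fun j _ => hexp j
      _ = ∑ p ∈ P, ∑ j ∈ Finset.range k, co p * (j : ℝ) ^ dg p := Finset.sum_comm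
      _ = ∑ p ∈ P, co p * ∑ j ∈ Finset.range k, (j : ℝ) ^ dg p := by
          refine Finset.sum_congr rfl fun p _ => ?_; rw [Finset.mul_sum]
      _ = _ := by
          rw [← Finset.sum_erase_add _ _ h00, add_comm]
          congr 1
          have hco0 : co (0, 0) = m₁ ^ i₁ * m₂ ^ i₂ := by simp [hco]
          have hdg0 : dg (0, 0) = n := by simp [hdg, hn]
          rw [hco0, hdg0]
  have hA := factA n k
  have habs1 : |m₁ ^ i₁ * m₂ ^ i₂ * ((∑ j ∈ Finset.range k, (j : ℝ) ^ n)
      - (k : ℝ) ^ (n + 1) / ((n : ℝ) + 1))| ≤ |m₁ ^ i₁ * m₂ ^ i₂| * (k : ℝ) ^ n := by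
    rw [abs_mul]
    refine mul_le_mul_of_nonneg_left ?_ (abs_nonneg _)
    rw [abs_le]
    constructor <;> linarith [hA.1, hA.2]
  have habs2 : ∀ p ∈ P.erase (0, 0),
      |co p * ∑ j ∈ Finset.range k, (j : ℝ) ^ dg p| ≤ |co p| * (k : ℝ) ^ n := by
    intro p hp
    have hpP := Finset.mem_of_mem_erase hp
    have hpne := Finset.ne_of_mem_erase hp
    have hp1 : p.1 ≤ i₁ := by
      have := (Finset.mem_product.mp hpP).1; simpa [Nat.lt_succ_iff] using this
    have hp2 : p.2 ≤ i₂ := by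
      have := (Finset.mem_product.mp hpP).2; simpa [Nat.lt_succ_iff] using this
    have hpne' : ¬(p.1 = 0 ∧ p.2 = 0) := by
      intro ⟨h1, h2⟩; exact hpne (Prod.ext h1 h2)
    have hdlt : dg p + 1 ≤ n := by simp only [hdg, hn]; omega
    rw [abs_mul]
    refine mul_le_mul_of_nonneg_left ?_ (abs_nonneg _)
    have hnonneg : (0 : ℝ) ≤ ∑ j ∈ Finset.range k, (j : ℝ) ^ dg p :=
      Finset.sum_nonneg fun j _ => by positivity
    rw [_root_.abs_of_nonneg hnonneg]
    calc (∑ j ∈ Finset.range k, (j : ℝ) ^ dg p) ≤ (k : ℝ) ^ (dg p + 1) := sum_pow_le _ _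
      _ ≤ (k : ℝ) ^ n := pow_le_pow_right₀ hk1 hdlt
  have hnn : ((n : ℝ) + 1) = ((i₁ : ℝ) + (i₂ : ℝ) + 1) := by push_cast [hn]; ring
  calc |(∑ j ∈ Finset.range k, (a + (j : ℝ) * m₁) ^ i₁ * (b + (j : ℝ) * m₂) ^ i₂)
          - m₁ ^ i₁ * m₂ ^ i₂ * (k : ℝ) ^ (i₁ + i₂ + 1) / ((i₁ : ℝ) + (i₂ : ℝ) + 1)|
      = |m₁ ^ i₁ * m₂ ^ i₂ * ((∑ j ∈ Finset.range k, (j : ℝ) ^ n)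
            - (k : ℝ) ^ (n + 1) / ((n : ℝ) + 1))
          + ∑ p ∈ P.erase (0, 0), co p * ∑ j ∈ Finset.range k, (j : ℝ) ^ dg p| := by
        rw [hsum, hnn]; congr 1; ring
    _ ≤ |m₁ ^ i₁ * m₂ ^ i₂ * ((∑ j ∈ Finset.range k, (j : ℝ) ^ n)
            - (k : ℝ) ^ (n + 1) / ((n : ℝ) + 1))|
          + |∑ p ∈ P.erase (0, 0), co p * ∑ j ∈ Finset.range k, (j : ℝ) ^ dg p| :=
        abs_add_le _ _
    _ ≤ |m₁ ^ i₁ * m₂ ^ i₂| * (k : ℝ) ^ n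
          + ∑ p ∈ P.erase (0, 0), |co p| * (k : ℝ) ^ n := by
        refine add_le_add habs1 ((Finset.abs_sum_le_sum_abs _ _).trans ?_)
        exact Finset.sum_le_sum habs2
    _ = (|m₁ ^ i₁ * m₂ ^ i₂| + ∑ p ∈ P.erase (0, 0), |co p|) * (k : ℝ) ^ n := by
        rw [← Finset.sum_mul]; ring

end GrowthAux

open GrowthAux in
/-- Growth formula for derivatives: for every multi-index `I = (i₁,i₂)` there is a
constant `C` with
`|D_I R_k(X₀) − R#(X₀)·(i^{|I|}·M₁^{i₁}·M₂^{i₂}/(|I|+1))·k^{|I|+1}| ≤ C·k^{|I|}`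
for all `k ≥ 1`. -/
theorem DI_trigSum_linearGrowth_asymptotics
    (M₁ M₂ : ℤ) (X₀ : ℝ × ℝ)
    (hX₀ : ∃ m : ℤ, X₀.1 * (M₁ : ℝ) + X₀.2 * (M₂ : ℝ) = 2 * Real.pi * (m : ℝ))
    (Rhat : ℕ → ℤ × ℤ → ℤ) (Rsharp : ℤ × ℤ → ℤ)
    (hfin : ∀ k, (Function.support (Rhat k)).Finite)
    (hsfin : (Function.support Rsharp).Finite)
    (hgrowth : LinearGrowth M₁ M₂ Rhat Rsharp) :
    ∀ i₁ i₂ : ℕ, ∃ C : ℝ, ∀ k : ℕ, 1 ≤ k →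
      ‖DI i₁ i₂ (trigSum (Rhat k)) X₀ -
          trigSum Rsharp X₀ *
            (Complex.I ^ (i₁ + i₂) * (M₁ : ℂ) ^ i₁ * (M₂ : ℂ) ^ i₂ / ((i₁ + i₂ : ℕ) + 1)) *
            (k : ℂ) ^ (i₁ + i₂ + 1)‖ ≤
        C * (k : ℝ) ^ (i₁ + i₂) := by
  intro i₁ i₂
  obtain ⟨m, hm⟩ := hX₀
  classical
  -- the value of the derivative as a finite sum
  set F : ℕ → ℂ := fun k => ∑ᶠ V : ℤ × ℤ,
      (Rhat k V : ℂ) * (Complex.I * V.1) ^ i₁ * (Complex.I * V.2) ^ i₂ * ee V X₀ with hF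
  have hDI : ∀ k, DI i₁ i₂ (trigSum (Rhat k)) X₀ = F k := fun k =>
    DI_trigSum_eval (Rhat k) (hfin k) i₁ i₂ X₀
  -- the increments
  set H : ℕ → ℂ := fun j => ∑ W ∈ hsfin.toFinset,
      (Rsharp W : ℂ) * ee W X₀ * Complex.I ^ (i₁ + i₂) *
        (((W.1 : ℂ) + (j : ℂ) * (M₁ : ℂ)) ^ i₁ * ((W.2 : ℂ) + (j : ℂ) * (M₂ : ℂ)) ^ i₂)
    with hH
  have hstep : ∀ k : ℕ, F (k + 1) = F k + H k := by
    intro k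
    set c : ℤ × ℤ := ((k : ℤ) * M₁, (k : ℤ) * M₂) with hc
    have hsupp1 : (Function.support fun V : ℤ × ℤ =>
        (Rhat k V : ℂ) * (Complex.I * V.1) ^ i₁ * (Complex.I * V.2) ^ i₂ * ee V X₀).Finite := by
      apply Set.Finite.subset (hfin k)
      intro V hV
      simp only [Function.mem_support] at hV ⊢
      intro h0; exact hV (by simp [h0])
    have hsupp2 : (Function.support fun V : ℤ × ℤ =>
        (Rsharp (V - c) : ℂ) * (Complex.I * V.1) ^ i₁ * (Complex.I * V.2) ^ i₂
          * ee V X₀).Finite := by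
      apply Set.Finite.subset (hsfin.image (fun W => W + c))
      intro V hV
      simp only [Function.mem_support] at hV
      refine ⟨V - c, ?_, by exact sub_add_cancel V c⟩
      simp only [Function.mem_support]
      intro h0; exact hV (by simp [h0])
    have h1 : F (k + 1) = ∑ᶠ V : ℤ × ℤ,
        ((Rhat k V : ℂ) * (Complex.I * V.1) ^ i₁ * (Complex.I * V.2) ^ i₂ * ee V X₀
          + (Rsharp (V - c) : ℂ) * (Complex.I * V.1) ^ i₁ * (Complex.I * V.2) ^ i₂
            * ee V X₀) := by
      rw [hF]
      refine finsum_congr fun V => ?_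
      have hVc : (V.1 - (k : ℤ) * M₁, V.2 - (k : ℤ) * M₂) = V - c := rfl
      rw [hgrowth k V, hVc]
      push_cast
      ring
    rw [h1, finsum_add_distrib hsupp1 hsupp2]
    congr 1
    have h2 : (∑ᶠ V : ℤ × ℤ, (Rsharp (V - c) : ℂ) * (Complex.I * V.1) ^ i₁
          * (Complex.I * V.2) ^ i₂ * ee V X₀)
        = ∑ V ∈ hsfin.toFinset.image (fun W => W + c),
            (Rsharp (V - c) : ℂ) * (Complex.I * V.1) ^ i₁ * (Complex.I * V.2) ^ i₂
              * ee V X₀ := by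
      apply finsum_eq_sum_of_support_subset
      intro V hV
      simp only [Function.mem_support] at hV
      simp only [Finset.coe_image, Set.Finite.coe_toFinset, Set.mem_image,
        Function.mem_support]
      refine ⟨V - c, ?_, by exact sub_add_cancel V c⟩
      intro h0; exact hV (by simp [h0])
    rw [h2, Finset.sum_image (fun x _ y _ h => by exact add_right_cancel h)]
    rw [hH]
    refine Finset.sum_congr rfl fun W hW => ?_
    have hWc : W + c - c = W := add_sub_cancel_right W c
    have hWadd : W + c = (W.1 + (k : ℤ) * M₁, W.2 + (k : ℤ) * M₂) := rfl
    rw [hWc, hWadd, ee_shift M₁ M₂ X₀ m hm W k, mul_pow, mul_pow, pow_add]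
    push_cast
    ring
  have hacc : ∀ k : ℕ, F k = F 0 + ∑ j ∈ Finset.range k, H j := by
    intro k
    induction k with
    | zero => simp
    | succ k ih => rw [hstep k, ih, Finset.sum_range_succ]; ring
  -- the trig sum of Rsharp as a finite sum
  have hRs : trigSum Rsharp X₀ = ∑ W ∈ hsfin.toFinset, (Rsharp W : ℂ) * ee W X₀ := by
    rw [trigSum_eq_TS Rsharp hsfin]; rfl
  -- per-point bounds
  have hkb : ∀ W : ℤ × ℤ, ∃ C : ℝ, ∀ k : ℕ, 1 ≤ k →
      |(∑ j ∈ Finset.range k, ((W.1 : ℝ) + (j : ℝ) * (M₁ : ℝ)) ^ i₁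
            * ((W.2 : ℝ) + (j : ℝ) * (M₂ : ℝ)) ^ i₂)
          - (M₁ : ℝ) ^ i₁ * (M₂ : ℝ) ^ i₂ * (k : ℝ) ^ (i₁ + i₂ + 1)
            / ((i₁ : ℝ) + (i₂ : ℝ) + 1)|
        ≤ C * (k : ℝ) ^ (i₁ + i₂) :=
    fun W => keybound (W.1 : ℝ) (W.2 : ℝ) (M₁ : ℝ) (M₂ : ℝ) i₁ i₂
  choose Cf hCf using hkb
  set G : ℤ × ℤ → ℕ → ℝ := fun W k =>
    (∑ j ∈ Finset.range k, ((W.1 : ℝ) + (j : ℝ) * (M₁ : ℝ)) ^ i₁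
        * ((W.2 : ℝ) + (j : ℝ) * (M₂ : ℝ)) ^ i₂)
      - (M₁ : ℝ) ^ i₁ * (M₂ : ℝ) ^ i₂ * (k : ℝ) ^ (i₁ + i₂ + 1)
        / ((i₁ : ℝ) + (i₂ : ℝ) + 1) with hG
  refine ⟨‖(F 0)‖ + ∑ W ∈ hsfin.toFinset, ‖((Rsharp W : ℂ))‖ * Cf W,
    fun k hk => ?_⟩
  have hk1 : (1 : ℝ) ≤ (k : ℝ) := by exact_mod_cast hk
  have hone : (1 : ℝ) ≤ (k : ℝ) ^ (i₁ + i₂) := one_le_pow₀ hk1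
  have hiden : DI i₁ i₂ (trigSum (Rhat k)) X₀ -
        trigSum Rsharp X₀ *
          (Complex.I ^ (i₁ + i₂) * (M₁ : ℂ) ^ i₁ * (M₂ : ℂ) ^ i₂ / ((i₁ + i₂ : ℕ) + 1)) *
          (k : ℂ) ^ (i₁ + i₂ + 1)
      = F 0 + ∑ W ∈ hsfin.toFinset,
          ((Rsharp W : ℂ) * ee W X₀ * Complex.I ^ (i₁ + i₂)) * ((G W k : ℝ) : ℂ) := by
    rw [hDI k, hacc k, hRs, Finset.sum_mul, Finset.sum_mul]
    simp only [hH]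
    rw [Finset.sum_comm]
    rw [add_sub_assoc, ← Finset.sum_sub_distrib]
    congr 1
    refine Finset.sum_congr rfl fun W hW => ?_
    rw [← Finset.mul_sum]
    simp only [hG]
    push_cast
    ring
  rw [hiden]
  have habsG : ∀ W ∈ hsfin.toFinset,
      ‖(((Rsharp W : ℂ) * ee W X₀ * Complex.I ^ (i₁ + i₂)) * ((G W k : ℝ) : ℂ))‖
        ≤ ‖((Rsharp W : ℂ))‖ * (Cf W * (k : ℝ) ^ (i₁ + i₂)) := by
    intro W hW
    have heq : ‖(((Rsharp W : ℂ) * ee W X₀ * Complex.I ^ (i₁ + i₂))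
          * ((G W k : ℝ) : ℂ))‖
        = ‖((Rsharp W : ℂ))‖ * |G W k| := by
      rw [norm_mul, norm_mul, norm_mul, abs_ee, norm_pow, Complex.norm_I, Complex.norm_real, Real.norm_eq_abs]
      ring
    rw [heq]
    exact mul_le_mul_of_nonneg_left (hCf W k hk) (norm_nonneg _)
  calc ‖(F 0 + ∑ W ∈ hsfin.toFinset,
          ((Rsharp W : ℂ) * ee W X₀ * Complex.I ^ (i₁ + i₂)) * ((G W k : ℝ) : ℂ))‖
      ≤ ‖(F 0)‖ + ‖(∑ W ∈ hsfin.toFinset,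
          ((Rsharp W : ℂ) * ee W X₀ * Complex.I ^ (i₁ + i₂)) * ((G W k : ℝ) : ℂ))‖ :=
        norm_add_le _ _
    _ ≤ ‖(F 0)‖ + ∑ W ∈ hsfin.toFinset,
          ‖(((Rsharp W : ℂ) * ee W X₀ * Complex.I ^ (i₁ + i₂))
            * ((G W k : ℝ) : ℂ))‖ := by
        exact add_le_add le_rfl (norm_sum_le _ _)
    _ ≤ ‖(F 0)‖ + ∑ W ∈ hsfin.toFinset,
          ‖((Rsharp W : ℂ))‖ * (Cf W * (k : ℝ) ^ (i₁ + i₂)) :=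
        add_le_add le_rfl (Finset.sum_le_sum habsG)
    _ ≤ (‖(F 0)‖ + ∑ W ∈ hsfin.toFinset, ‖((Rsharp W : ℂ))‖ * Cf W)
          * (k : ℝ) ^ (i₁ + i₂) := by
        rw [add_mul, Finset.sum_mul]
        have h1 : ‖(F 0)‖ ≤ ‖(F 0)‖ * (k : ℝ) ^ (i₁ + i₂) :=
          le_mul_of_one_le_right (norm_nonneg _) hone
        have h2 : (∑ W ∈ hsfin.toFinset,
              ‖((Rsharp W : ℂ))‖ * (Cf W * (k : ℝ) ^ (i₁ + i₂)))
            = ∑ W ∈ hsfin.toFinset,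
              ‖((Rsharp W : ℂ))‖ * Cf W * (k : ℝ) ^ (i₁ + i₂) :=
          Finset.sum_congr rfl fun W _ => by ring
        linarith [h1, h2.le, h2.ge]

end
end

section
/- Exact second-order growth formula for first derivatives: Suppose (R̂_k) has linear growth with growth generator R̂#. Then for j = 1, 2 and every k ≥ 0, ∂_j R_k(X₀) = ( (i·M_j/2)·R#(X₀) )·k² + ( ∂_j R#(X₀) − (i·M_j/2)·R#(X₀) )·k + ∂_j R₀(X₀), where i denotes the imaginary unit. -/
open Complex Real Filter

noncomputable section

lemma trig_support' (A : ℤ × ℤ → ℤ) (f : ℤ × ℤ → ℂ) :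
    (Function.support fun V => (A V : ℂ) * f V) ⊆ Function.support A := by
  intro V hV
  simp only [Function.mem_support] at hV ⊢
  intro h; apply hV; simp [h]

lemma trig_support_finite {A : ℤ × ℤ → ℤ} (hA : (Function.support A).Finite)
    (f : ℤ × ℤ → ℂ) : (Function.support fun V => (A V : ℂ) * f V).Finite :=
  hA.subset (trig_support' A f)

lemma trigSum_eq_sum {A : ℤ × ℤ → ℤ} (hA : (Function.support A).Finite) (X : ℝ × ℝ) :
    trigSum A X = ∑ V ∈ hA.toFinset, (A V : ℂ) *
      Complex.exp (Complex.I * ((X.1 * (V.1 : ℝ) + X.2 * (V.2 : ℝ) : ℝ) : ℂ)) :=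
  finsum_eq_sum_of_support_subset _ (by rw [Set.Finite.coe_toFinset]; exact trig_support' A _)

lemma hasDerivAt_trigSum_fst {A : ℤ × ℤ → ℤ} (hA : (Function.support A).Finite) (x : ℝ × ℝ) :
    HasDerivAt (fun t : ℝ => trigSum A (t, x.2))
      (∑ V ∈ hA.toFinset, (A V : ℂ) * (Complex.I * (V.1 : ℂ)) *
        Complex.exp (Complex.I * ((x.1 * (V.1 : ℝ) + x.2 * (V.2 : ℝ) : ℝ) : ℂ))) x.1 := by
  have hrw : (fun t : ℝ => trigSum A (t, x.2)) = fun t : ℝ =>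
      ∑ V ∈ hA.toFinset, (A V : ℂ) *
        Complex.exp (Complex.I * ((t * (V.1 : ℝ) + x.2 * (V.2 : ℝ) : ℝ) : ℂ)) := by
    funext t; exact trigSum_eq_sum hA (t, x.2)
  rw [hrw]
  apply HasDerivAt.fun_sum
  intro V _
  have h0 : HasDerivAt (fun t : ℝ => t * (V.1 : ℝ) + x.2 * (V.2 : ℝ)) (V.1 : ℝ) x.1 := by
    simpa using ((hasDerivAt_id x.1).mul_const (V.1 : ℝ)).add_const (x.2 * (V.2 : ℝ))
  have h1 := (h0.ofReal_comp.const_mul Complex.I).cexp.const_mul ((A V : ℂ))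
  convert h1 using 1
  rfl
  push_cast
  ring

lemma hasDerivAt_trigSum_snd {A : ℤ × ℤ → ℤ} (hA : (Function.support A).Finite) (x : ℝ × ℝ) :
    HasDerivAt (fun t : ℝ => trigSum A (x.1, t))
      (∑ V ∈ hA.toFinset, (A V : ℂ) * (Complex.I * (V.2 : ℂ)) *
        Complex.exp (Complex.I * ((x.1 * (V.1 : ℝ) + x.2 * (V.2 : ℝ) : ℝ) : ℂ))) x.2 := by
  have hrw : (fun t : ℝ => trigSum A (x.1, t)) = fun t : ℝ =>
      ∑ V ∈ hA.toFinset, (A V : ℂ) *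
        Complex.exp (Complex.I * ((x.1 * (V.1 : ℝ) + t * (V.2 : ℝ) : ℝ) : ℂ)) := by
    funext t; exact trigSum_eq_sum hA (x.1, t)
  rw [hrw]
  apply HasDerivAt.fun_sum
  intro V _
  have h0 : HasDerivAt (fun t : ℝ => x.1 * (V.1 : ℝ) + t * (V.2 : ℝ)) (V.2 : ℝ) x.2 := by
    simpa using ((hasDerivAt_id x.2).mul_const (V.2 : ℝ)).const_add (x.1 * (V.1 : ℝ))
  have h1 := (h0.ofReal_comp.const_mul Complex.I).cexp.const_mul ((A V : ℂ))
  convert h1 using 1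
  rfl
  push_cast
  ring

lemma trigSum_add {A B : ℤ × ℤ → ℤ} (hA : (Function.support A).Finite)
    (hB : (Function.support B).Finite) (X : ℝ × ℝ) :
    trigSum (fun V => A V + B V) X = trigSum A X + trigSum B X := by
  unfold trigSum
  simp only [Int.cast_add, add_mul]
  exact finsum_add_distrib (trig_support_finite hA _) (trig_support_finite hB _)

lemma trigSum_shift {Rsharp : ℤ × ℤ → ℤ} (hsfin : (Function.support Rsharp).Finite)
    (M₁ M₂ c : ℤ) (X : ℝ × ℝ) :
    trigSum (fun V => Rsharp (V.1 - c * M₁, V.2 - c * M₂)) X =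
      Complex.exp (Complex.I * (c : ℂ) * ((X.1 * (M₁ : ℝ) + X.2 * (M₂ : ℝ) : ℝ) : ℂ)) *
        trigSum Rsharp X := by
  unfold trigSum
  rw [mul_finsum _ _]
  rw [← finsum_comp_equiv ((Equiv.addRight (c * M₁)).prodCongr (Equiv.addRight (c * M₂)))]
  apply finsum_congr
  intro W
  simp only [Equiv.prodCongr_apply, Equiv.coe_addRight, Prod.map, add_sub_cancel_right]
  have harg : Complex.I * ((X.1 * ((W.1 + c * M₁ : ℤ) : ℝ) + X.2 * ((W.2 + c * M₂ : ℤ) : ℝ) : ℝ) : ℂ)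
      = Complex.I * (c : ℂ) * ((X.1 * (M₁ : ℝ) + X.2 * (M₂ : ℝ) : ℝ) : ℂ) +
        Complex.I * ((X.1 * (W.1 : ℝ) + X.2 * (W.2 : ℝ) : ℝ) : ℂ) := by
    push_cast; ring
  rw [harg, Complex.exp_add]
  ring

/-- Exact second-order growth formula for the first partial derivatives:
`∂_j R_k(X₀) = (i·M_j/2·R#(X₀))·k² + (∂_j R#(X₀) − i·M_j/2·R#(X₀))·k + ∂_j R₀(X₀)`
for `j = 1, 2`. -/
theorem pderiv_trigSum_linearGrowth
    (M₁ M₂ : ℤ) (X₀ : ℝ × ℝ)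
    (hX₀ : ∃ m : ℤ, X₀.1 * (M₁ : ℝ) + X₀.2 * (M₂ : ℝ) = 2 * Real.pi * (m : ℝ))
    (Rhat : ℕ → ℤ × ℤ → ℤ) (Rsharp : ℤ × ℤ → ℤ)
    (hfin : ∀ k, (Function.support (Rhat k)).Finite)
    (hsfin : (Function.support Rsharp).Finite)
    (hgrowth : LinearGrowth M₁ M₂ Rhat Rsharp) :
    ∀ k : ℕ,
      (pd1 (trigSum (Rhat k)) X₀ =
          (Complex.I * (M₁ : ℂ) / 2 * trigSum Rsharp X₀) * (k : ℂ) ^ 2 +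
            (pd1 (trigSum Rsharp) X₀ - Complex.I * (M₁ : ℂ) / 2 * trigSum Rsharp X₀) * (k : ℂ) +
            pd1 (trigSum (Rhat 0)) X₀) ∧
      (pd2 (trigSum (Rhat k)) X₀ =
          (Complex.I * (M₂ : ℂ) / 2 * trigSum Rsharp X₀) * (k : ℂ) ^ 2 +
            (pd2 (trigSum Rsharp) X₀ - Complex.I * (M₂ : ℂ) / 2 * trigSum Rsharp X₀) * (k : ℂ) +
            pd2 (trigSum (Rhat 0)) X₀) := by
  obtain ⟨m, hm⟩ := hX₀
  have hexp1 : ∀ c : ℕ,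
      Complex.exp (Complex.I * (c : ℂ) * ((X₀.1 * (M₁ : ℝ) + X₀.2 * (M₂ : ℝ) : ℝ) : ℂ)) = 1 := by
    intro c
    rw [hm]
    have h2 : Complex.I * (c : ℂ) * ((2 * Real.pi * (m : ℝ) : ℝ) : ℂ)
        = ((c * m : ℤ) : ℂ) * (2 * (Real.pi : ℂ) * Complex.I) := by push_cast; ring
    rw [h2]
    exact Complex.exp_int_mul_two_pi_mul_I _
  have hBfin : ∀ k : ℕ,
      (Function.support fun V : ℤ × ℤ =>
        Rsharp (V.1 - (k : ℤ) * M₁, V.2 - (k : ℤ) * M₂)).Finite := by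
    intro k
    apply Set.Finite.subset (hsfin.image (fun p => (p.1 + (k : ℤ) * M₁, p.2 + (k : ℤ) * M₂)))
    intro V hV
    exact ⟨(V.1 - (k : ℤ) * M₁, V.2 - (k : ℤ) * M₂), hV, by simp⟩
  -- derivative step for pd1
  have step1 : ∀ k : ℕ, pd1 (trigSum (Rhat (k + 1))) X₀ =
      pd1 (trigSum (Rhat k)) X₀ + Complex.I * (k : ℂ) * (M₁ : ℂ) * trigSum Rsharp X₀ +
        pd1 (trigSum Rsharp) X₀ := by
    intro k
    have hfun : (fun t : ℝ => trigSum (Rhat (k + 1)) (t, X₀.2)) = fun t : ℝ =>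
        trigSum (Rhat k) (t, X₀.2) +
          Complex.exp (Complex.I * (k : ℂ) * ((t * (M₁ : ℝ) + X₀.2 * (M₂ : ℝ) : ℝ) : ℂ)) *
            trigSum Rsharp (t, X₀.2) := by
      funext t
      have h1 : trigSum (Rhat (k + 1)) (t, X₀.2) = trigSum
          (fun V => Rhat k V + Rsharp (V.1 - (k : ℤ) * M₁, V.2 - (k : ℤ) * M₂)) (t, X₀.2) := by
        congr 1; funext V; exact hgrowth k V
      rw [h1, trigSum_add (hfin k) (hBfin k), trigSum_shift hsfin M₁ M₂ (k : ℤ) (t, X₀.2)]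
      push_cast
      ring_nf
    have hk : HasDerivAt (fun t : ℝ => trigSum (Rhat k) (t, X₀.2))
        (pd1 (trigSum (Rhat k)) X₀) X₀.1 :=
      (hasDerivAt_trigSum_fst (hfin k) X₀).differentiableAt.hasDerivAt
    have hsh : HasDerivAt (fun t : ℝ => trigSum Rsharp (t, X₀.2))
        (pd1 (trigSum Rsharp) X₀) X₀.1 :=
      (hasDerivAt_trigSum_fst hsfin X₀).differentiableAt.hasDerivAt
    have h0 : HasDerivAt (fun t : ℝ => t * (M₁ : ℝ) + X₀.2 * (M₂ : ℝ)) (M₁ : ℝ) X₀.1 := by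
      simpa using ((hasDerivAt_id X₀.1).mul_const (M₁ : ℝ)).add_const (X₀.2 * (M₂ : ℝ))
    have hE : HasDerivAt
        (fun t : ℝ => Complex.exp (Complex.I * (k : ℂ) * ((t * (M₁ : ℝ) + X₀.2 * (M₂ : ℝ) : ℝ) : ℂ)))
        (Complex.I * (k : ℂ) * (M₁ : ℂ)) X₀.1 := by
      have h1 := (h0.ofReal_comp.const_mul (Complex.I * (k : ℂ))).cexp
      convert h1 using 1
      rw [hexp1 k]
      push_cast
      ring
    have hT := hk.fun_add (hE.fun_mul hsh)
    rw [← hfun] at hT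
    have hd : pd1 (trigSum (Rhat (k + 1))) X₀ =
        deriv (fun t : ℝ => trigSum (Rhat (k + 1)) (t, X₀.2)) X₀.1 := rfl
    rw [hd, hT.deriv, hexp1 k, one_mul]
    simp only [Prod.mk.eta]
    ring
  -- derivative step for pd2
  have step2 : ∀ k : ℕ, pd2 (trigSum (Rhat (k + 1))) X₀ =
      pd2 (trigSum (Rhat k)) X₀ + Complex.I * (k : ℂ) * (M₂ : ℂ) * trigSum Rsharp X₀ +
        pd2 (trigSum Rsharp) X₀ := by
    intro k
    have hfun : (fun t : ℝ => trigSum (Rhat (k + 1)) (X₀.1, t)) = fun t : ℝ =>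
        trigSum (Rhat k) (X₀.1, t) +
          Complex.exp (Complex.I * (k : ℂ) * ((X₀.1 * (M₁ : ℝ) + t * (M₂ : ℝ) : ℝ) : ℂ)) *
            trigSum Rsharp (X₀.1, t) := by
      funext t
      have h1 : trigSum (Rhat (k + 1)) (X₀.1, t) = trigSum
          (fun V => Rhat k V + Rsharp (V.1 - (k : ℤ) * M₁, V.2 - (k : ℤ) * M₂)) (X₀.1, t) := by
        congr 1; funext V; exact hgrowth k V
      rw [h1, trigSum_add (hfin k) (hBfin k), trigSum_shift hsfin M₁ M₂ (k : ℤ) (X₀.1, t)]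
      push_cast
      ring_nf
    have hk : HasDerivAt (fun t : ℝ => trigSum (Rhat k) (X₀.1, t))
        (pd2 (trigSum (Rhat k)) X₀) X₀.2 :=
      (hasDerivAt_trigSum_snd (hfin k) X₀).differentiableAt.hasDerivAt
    have hsh : HasDerivAt (fun t : ℝ => trigSum Rsharp (X₀.1, t))
        (pd2 (trigSum Rsharp) X₀) X₀.2 :=
      (hasDerivAt_trigSum_snd hsfin X₀).differentiableAt.hasDerivAt
    have h0 : HasDerivAt (fun t : ℝ => X₀.1 * (M₁ : ℝ) + t * (M₂ : ℝ)) (M₂ : ℝ) X₀.2 := by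
      simpa using ((hasDerivAt_id X₀.2).mul_const (M₂ : ℝ)).const_add (X₀.1 * (M₁ : ℝ))
    have hE : HasDerivAt
        (fun t : ℝ => Complex.exp (Complex.I * (k : ℂ) * ((X₀.1 * (M₁ : ℝ) + t * (M₂ : ℝ) : ℝ) : ℂ)))
        (Complex.I * (k : ℂ) * (M₂ : ℂ)) X₀.2 := by
      have h1 := (h0.ofReal_comp.const_mul (Complex.I * (k : ℂ))).cexp
      convert h1 using 1
      rw [hexp1 k]
      push_cast
      ring
    have hT := hk.fun_add (hE.fun_mul hsh)
    rw [← hfun] at hT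
    have hd : pd2 (trigSum (Rhat (k + 1))) X₀ =
        deriv (fun t : ℝ => trigSum (Rhat (k + 1)) (X₀.1, t)) X₀.2 := rfl
    rw [hd, hT.deriv, hexp1 k, one_mul]
    simp only [Prod.mk.eta]
    ring
  intro k
  constructor
  · induction k with
    | zero => simp
    | succ k ih => rw [step1 k, ih]; push_cast; ring
  · induction k with
    | zero => simp
    | succ k ih => rw [step2 k, ih]; push_cast; ring


end
end

section
/- Convergence Lemma: Let (F_k)_{k≥1} be a quadratic growth family. Then the rescaled functions G_k(X) = F_k(k⁻²·X) converge in the C^∞ topology to the affine function G(x₁,x₂) = F₁(0,0) + C₁·x₁ + C₂·x₂; that is, every partial derivative of G_k converges, uniformly on each compact subset of ℝ², to the corresponding partial derivative of G. -/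
open Filter

noncomputable section

namespace ConvAux
open Function

/-- The sum of a two-variable power series. -/
def S (c : ℕ × ℕ → ℝ) : ℝ × ℝ → ℝ := fun X => ∑' I : ℕ × ℕ, c I * X.1 ^ I.1 * X.2 ^ I.2

/-- Entire-type coefficients. -/
def Good (c : ℕ × ℕ → ℝ) : Prop :=
  ∀ r : ℝ, 0 < r → Summable (fun I : ℕ × ℕ => |c I| * r ^ (I.1 + I.2))

def sh1 (c : ℕ × ℕ → ℝ) : ℕ × ℕ → ℝ := fun I => ((I.1 + 1 : ℕ) : ℝ) * c (I.1 + 1, I.2)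
def sh2 (c : ℕ × ℕ → ℝ) : ℕ × ℕ → ℝ := fun I => ((I.2 + 1 : ℕ) : ℝ) * c (I.1, I.2 + 1)

lemma good_summable_abs {c : ℕ × ℕ → ℝ} (hc : Good c) (X : ℝ × ℝ) :
    Summable (fun I : ℕ × ℕ => |c I * X.1 ^ I.1 * X.2 ^ I.2|) := by
  have hr : (0:ℝ) < max |X.1| |X.2| + 1 := by positivity
  refine Summable.of_nonneg_of_le (fun I => abs_nonneg _) (fun I => ?_) (hc _ hr)
  set r := max |X.1| |X.2| + 1 with hrdef
  have h1 : |X.1| ≤ r := by simp [hrdef]; nlinarith [le_max_left |X.1| |X.2|]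
  have h2 : |X.2| ≤ r := by simp [hrdef]; nlinarith [le_max_right |X.1| |X.2|]
  calc |c I * X.1 ^ I.1 * X.2 ^ I.2| = |c I| * |X.1| ^ I.1 * |X.2| ^ I.2 := by
        rw [abs_mul, abs_mul, abs_pow, abs_pow]
    _ ≤ |c I| * r ^ I.1 * r ^ I.2 := by
        have e1 := pow_le_pow_left₀ (abs_nonneg X.1) h1 I.1
        have e2 := pow_le_pow_left₀ (abs_nonneg X.2) h2 I.2
        have e0 : (0:ℝ) ≤ |c I| := abs_nonneg _
        apply mul_le_mul (mul_le_mul le_rfl e1 (by positivity) e0) e2 (by positivity)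
        positivity
    _ = |c I| * r ^ (I.1 + I.2) := by rw [pow_add]; ring

lemma good_summable {c : ℕ × ℕ → ℝ} (hc : Good c) (X : ℝ × ℝ) :
    Summable (fun I : ℕ × ℕ => c I * X.1 ^ I.1 * X.2 ^ I.2) :=
  (good_summable_abs hc X).of_abs

lemma hasSum_S {c : ℕ × ℕ → ℝ} (hc : Good c) (X : ℝ × ℝ) :
    HasSum (fun I : ℕ × ℕ => c I * X.1 ^ I.1 * X.2 ^ I.2) (S c X) :=
  (good_summable hc X).hasSum

/-- Key elementary inequality. -/
lemma nat_mul_pow_le {m : ℝ} (hm : 1 ≤ m) (a b : ℕ) :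
    ((a + 1 : ℕ) : ℝ) * m ^ (a + b) ≤ (2 * m) ^ (a + 1 + b) := by
  have h0 : (0:ℝ) < m := lt_of_lt_of_le one_pos hm
  have h1 : ((a + 1 : ℕ) : ℝ) ≤ 2 ^ (a + 1 + b) := by
    calc ((a + 1 : ℕ) : ℝ) ≤ (2 ^ (a + 1) : ℕ) := by
          exact_mod_cast (Nat.lt_two_pow_self (n := a+1)).le
      _ ≤ ((2:ℝ)) ^ (a + 1 + b) := by
          push_cast
          exact pow_le_pow_right₀ one_le_two (by omega)
  have h2 : m ^ (a + b) ≤ m ^ (a + 1 + b) := pow_le_pow_right₀ hm (by omega)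
  calc ((a + 1 : ℕ) : ℝ) * m ^ (a + b) ≤ 2 ^ (a + 1 + b) * m ^ (a + 1 + b) := by
        apply mul_le_mul h1 h2 (by positivity) (by positivity)
    _ = (2 * m) ^ (a + 1 + b) := by rw [mul_pow]

lemma sh1_term_le {c : ℕ × ℕ → ℝ} {m : ℝ} (hm : 1 ≤ m) (I : ℕ × ℕ) :
    |sh1 c I| * m ^ (I.1 + I.2) ≤ |c (I.1 + 1, I.2)| * (2 * m) ^ ((I.1 + 1) + I.2) := by
  have : |sh1 c I| = ((I.1 + 1 : ℕ) : ℝ) * |c (I.1 + 1, I.2)| := by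
    rw [sh1, abs_mul, abs_of_nonneg (by positivity : (0:ℝ) ≤ ((I.1 + 1 : ℕ) : ℝ))]
  rw [this]
  calc ((I.1 + 1 : ℕ) : ℝ) * |c (I.1 + 1, I.2)| * m ^ (I.1 + I.2)
      = |c (I.1 + 1, I.2)| * (((I.1 + 1 : ℕ) : ℝ) * m ^ (I.1 + I.2)) := by ring
    _ ≤ |c (I.1 + 1, I.2)| * (2 * m) ^ ((I.1 + 1) + I.2) := by
        apply mul_le_mul_of_nonneg_left (nat_mul_pow_le hm I.1 I.2) (abs_nonneg _)

lemma sh2_term_le {c : ℕ × ℕ → ℝ} {m : ℝ} (hm : 1 ≤ m) (I : ℕ × ℕ) :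
    |sh2 c I| * m ^ (I.1 + I.2) ≤ |c (I.1, I.2 + 1)| * (2 * m) ^ (I.1 + (I.2 + 1)) := by
  have : |sh2 c I| = ((I.2 + 1 : ℕ) : ℝ) * |c (I.1, I.2 + 1)| := by
    rw [sh2, abs_mul, abs_of_nonneg (by positivity : (0:ℝ) ≤ ((I.2 + 1 : ℕ) : ℝ))]
  rw [this]
  have key : ((I.2 + 1 : ℕ) : ℝ) * m ^ (I.1 + I.2) ≤ (2 * m) ^ (I.1 + (I.2 + 1)) := by
    have := nat_mul_pow_le hm I.2 I.1
    rw [Nat.add_comm I.2 I.1] at this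
    calc ((I.2 + 1 : ℕ) : ℝ) * m ^ (I.1 + I.2) ≤ (2*m) ^ (I.2 + 1 + I.1) := this
      _ = (2 * m) ^ (I.1 + (I.2 + 1)) := by ring_nf
  calc ((I.2 + 1 : ℕ) : ℝ) * |c (I.1, I.2 + 1)| * m ^ (I.1 + I.2)
      = |c (I.1, I.2 + 1)| * (((I.2 + 1 : ℕ) : ℝ) * m ^ (I.1 + I.2)) := by ring
    _ ≤ |c (I.1, I.2 + 1)| * (2 * m) ^ (I.1 + (I.2 + 1)) :=
        mul_le_mul_of_nonneg_left key (abs_nonneg _)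

lemma inj1 : Injective (fun I : ℕ × ℕ => (I.1 + 1, I.2)) := by
  intro I J h
  simp only [Prod.mk.injEq] at h
  exact Prod.ext (by omega) h.2

lemma inj2 : Injective (fun I : ℕ × ℕ => (I.1, I.2 + 1)) := by
  intro I J h
  simp only [Prod.mk.injEq] at h
  exact Prod.ext h.1 (by omega)

lemma good_sh1 {c : ℕ × ℕ → ℝ} (hc : Good c) : Good (sh1 c) := by
  intro r hr
  set m := max r 1 with hmdef
  have hm1 : 1 ≤ m := le_max_right _ _
  have hrm : r ≤ m := le_max_left _ _
  have hsum : Summable (fun I : ℕ × ℕ => |c I| * (2 * m) ^ (I.1 + I.2)) :=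
    hc (2 * m) (by positivity)
  have hcomp : Summable ((fun I : ℕ × ℕ => |c I| * (2 * m) ^ (I.1 + I.2)) ∘
      (fun I : ℕ × ℕ => (I.1 + 1, I.2))) := hsum.comp_injective inj1
  refine Summable.of_nonneg_of_le (fun I => by positivity) (fun I => ?_) hcomp
  calc |sh1 c I| * r ^ (I.1 + I.2) ≤ |sh1 c I| * m ^ (I.1 + I.2) := by
        apply mul_le_mul_of_nonneg_left _ (abs_nonneg _)
        exact pow_le_pow_left₀ (le_of_lt hr) hrm _
    _ ≤ |c (I.1 + 1, I.2)| * (2 * m) ^ ((I.1 + 1) + I.2) := sh1_term_le hm1 I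
    _ = ((fun I : ℕ × ℕ => |c I| * (2 * m) ^ (I.1 + I.2)) ∘
        (fun I : ℕ × ℕ => (I.1 + 1, I.2))) I := rfl

lemma good_sh2 {c : ℕ × ℕ → ℝ} (hc : Good c) : Good (sh2 c) := by
  intro r hr
  set m := max r 1 with hmdef
  have hm1 : 1 ≤ m := le_max_right _ _
  have hrm : r ≤ m := le_max_left _ _
  have hsum : Summable (fun I : ℕ × ℕ => |c I| * (2 * m) ^ (I.1 + I.2)) :=
    hc (2 * m) (by positivity)
  have hcomp : Summable ((fun I : ℕ × ℕ => |c I| * (2 * m) ^ (I.1 + I.2)) ∘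
      (fun I : ℕ × ℕ => (I.1, I.2 + 1))) := hsum.comp_injective inj2
  refine Summable.of_nonneg_of_le (fun I => by positivity) (fun I => ?_) hcomp
  calc |sh2 c I| * r ^ (I.1 + I.2) ≤ |sh2 c I| * m ^ (I.1 + I.2) := by
        apply mul_le_mul_of_nonneg_left _ (abs_nonneg _)
        exact pow_le_pow_left₀ (le_of_lt hr) hrm _
    _ ≤ |c (I.1, I.2 + 1)| * (2 * m) ^ (I.1 + (I.2 + 1)) := sh2_term_le hm1 I
    _ = ((fun I : ℕ × ℕ => |c I| * (2 * m) ^ (I.1 + I.2)) ∘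
        (fun I : ℕ × ℕ => (I.1, I.2 + 1))) I := rfl

lemma deriv_term_bound {m s u : ℝ} (hm : 1 ≤ m) (hs : |s| ≤ m) (hu : |u| ≤ m) (n b : ℕ) :
    (n : ℝ) * |s| ^ (n - 1) * |u| ^ b ≤ (2 * m) ^ (n + b) := by
  have hm0 : (0:ℝ) < m := lt_of_lt_of_le one_pos hm
  have h1 : (n : ℝ) ≤ 2 ^ (n + b) := by
    calc (n : ℝ) ≤ ((2 ^ n : ℕ) : ℝ) := by exact_mod_cast (Nat.lt_two_pow_self (n := n)).le
      _ ≤ (2:ℝ) ^ (n + b) := by push_cast; exact pow_le_pow_right₀ one_le_two (by omega)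
  have h2 : |s| ^ (n - 1) ≤ m ^ n := by
    calc |s| ^ (n - 1) ≤ m ^ (n - 1) := pow_le_pow_left₀ (abs_nonneg s) hs _
      _ ≤ m ^ n := pow_le_pow_right₀ hm (by omega)
  have h3 : |u| ^ b ≤ m ^ b := pow_le_pow_left₀ (abs_nonneg u) hu _
  calc (n : ℝ) * |s| ^ (n - 1) * |u| ^ b
      ≤ 2 ^ (n + b) * m ^ n * m ^ b := by
        apply mul_le_mul (mul_le_mul h1 h2 (by positivity) (by positivity)) h3
          (by positivity) (by positivity)
    _ = (2 * m) ^ (n + b) := by rw [mul_pow]; rw [pow_add, pow_add]; ring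

lemma hasDerivAt_S_fst {c : ℕ × ℕ → ℝ} (hc : Good c) (X : ℝ × ℝ) :
    HasDerivAt (fun t => S c (t, X.2)) (S (sh1 c) X) X.1 := by
  set y := X.2 with hy
  set m := |X.1| + |y| + 1 with hmdef
  have hm1 : 1 ≤ m := by have := abs_nonneg X.1; have := abs_nonneg y; simp [hmdef]; linarith
  have hym : |y| ≤ m := by have := abs_nonneg X.1; simp [hmdef]; linarith
  have hu : Summable (fun I : ℕ × ℕ => |c I| * (2 * m) ^ (I.1 + I.2)) :=
    hc _ (by positivity)
  set g : ℕ × ℕ → ℝ → ℝ := fun I t => c I * t ^ I.1 * y ^ I.2 with hg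
  set g' : ℕ × ℕ → ℝ → ℝ := fun I t => c I * ((I.1 : ℝ) * t ^ (I.1 - 1)) * y ^ I.2 with hg'
  have hderiv : ∀ I : ℕ × ℕ, ∀ t ∈ Metric.ball (0:ℝ) m, HasDerivAt (g I) (g' I t) t := by
    intro I t _
    exact ((hasDerivAt_pow I.1 t).const_mul (c I)).mul_const (y ^ I.2)
  have hbound : ∀ I : ℕ × ℕ, ∀ t ∈ Metric.ball (0:ℝ) m,
      ‖g' I t‖ ≤ |c I| * (2 * m) ^ (I.1 + I.2) := by
    intro I t ht
    have htm : |t| ≤ m := by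
      rw [Metric.mem_ball, Real.dist_eq, sub_zero] at ht; linarith
    have : ‖g' I t‖ = |c I| * ((I.1 : ℝ) * |t| ^ (I.1 - 1) * |y| ^ I.2) := by
      simp only [hg', Real.norm_eq_abs, abs_mul, abs_pow]
      rw [abs_of_nonneg (by positivity : (0:ℝ) ≤ (I.1 : ℝ))]
      ring
    rw [this]
    exact mul_le_mul_of_nonneg_left
      (by simpa [mul_assoc] using deriv_term_bound hm1 htm hym I.1 I.2) (abs_nonneg _)
  have hX1 : X.1 ∈ Metric.ball (0:ℝ) m := by
    rw [Metric.mem_ball, Real.dist_eq, sub_zero]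
    have := abs_nonneg y; simp [hmdef]; linarith
  have hg0 : Summable (fun I : ℕ × ℕ => g I X.1) := good_summable hc (X.1, y)
  have H := hasDerivAt_tsum_of_isPreconnected hu Metric.isOpen_ball
    (convex_ball (0:ℝ) m).isPreconnected hderiv hbound hX1 hg0 hX1
  have hsum_eq : (∑' I : ℕ × ℕ, g' I X.1) = S (sh1 c) X := by
    have hsupp : Function.support (fun I : ℕ × ℕ => g' I X.1) ⊆
        Set.range (fun I : ℕ × ℕ => (I.1 + 1, I.2)) := by
      rintro ⟨a, b⟩ hI
      cases a with
      | zero => exfalso; apply hI; simp [hg']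
      | succ a => exact ⟨(a, b), rfl⟩
    have hre := inj1.tsum_eq (f := fun I : ℕ × ℕ => g' I X.1) hsupp
    rw [← hre]
    apply tsum_congr
    intro J
    show g' (J.1 + 1, J.2) X.1 = sh1 c J * X.1 ^ J.1 * X.2 ^ J.2
    simp only [hg', sh1, ← hy]
    push_cast
    ring_nf
  rw [← hsum_eq]
  exact H

lemma hasDerivAt_S_snd {c : ℕ × ℕ → ℝ} (hc : Good c) (X : ℝ × ℝ) :
    HasDerivAt (fun t => S c (X.1, t)) (S (sh2 c) X) X.2 := by
  set x := X.1 with hx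
  set m := |x| + |X.2| + 1 with hmdef
  have hm1 : 1 ≤ m := by have := abs_nonneg x; have := abs_nonneg X.2; simp [hmdef]; linarith
  have hxm : |x| ≤ m := by have := abs_nonneg X.2; simp [hmdef]; linarith
  have hu : Summable (fun I : ℕ × ℕ => |c I| * (2 * m) ^ (I.1 + I.2)) :=
    hc _ (by positivity)
  set g : ℕ × ℕ → ℝ → ℝ := fun I t => c I * x ^ I.1 * t ^ I.2 with hg
  set g' : ℕ × ℕ → ℝ → ℝ := fun I t => c I * x ^ I.1 * ((I.2 : ℝ) * t ^ (I.2 - 1)) with hg'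
  have hderiv : ∀ I : ℕ × ℕ, ∀ t ∈ Metric.ball (0:ℝ) m, HasDerivAt (g I) (g' I t) t := by
    intro I t _
    exact (hasDerivAt_pow I.2 t).const_mul (c I * x ^ I.1)
  have hbound : ∀ I : ℕ × ℕ, ∀ t ∈ Metric.ball (0:ℝ) m,
      ‖g' I t‖ ≤ |c I| * (2 * m) ^ (I.1 + I.2) := by
    intro I t ht
    have htm : |t| ≤ m := by
      rw [Metric.mem_ball, Real.dist_eq, sub_zero] at ht; linarith
    have heq : ‖g' I t‖ = |c I| * ((I.2 : ℝ) * |t| ^ (I.2 - 1) * |x| ^ I.1) := by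
      simp only [hg', Real.norm_eq_abs, abs_mul, abs_pow]
      rw [abs_of_nonneg (by positivity : (0:ℝ) ≤ (I.2 : ℝ))]
      ring
    rw [heq]
    apply mul_le_mul_of_nonneg_left _ (abs_nonneg _)
    calc (I.2 : ℝ) * |t| ^ (I.2 - 1) * |x| ^ I.1 ≤ (2 * m) ^ (I.2 + I.1) :=
          deriv_term_bound hm1 htm hxm I.2 I.1
      _ = (2 * m) ^ (I.1 + I.2) := by rw [Nat.add_comm]
  have hX2 : X.2 ∈ Metric.ball (0:ℝ) m := by
    rw [Metric.mem_ball, Real.dist_eq, sub_zero]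
    have := abs_nonneg x; simp [hmdef]; linarith
  have hg0 : Summable (fun I : ℕ × ℕ => g I X.2) := good_summable hc (x, X.2)
  have H := hasDerivAt_tsum_of_isPreconnected hu Metric.isOpen_ball
    (convex_ball (0:ℝ) m).isPreconnected hderiv hbound hX2 hg0 hX2
  have hsum_eq : (∑' I : ℕ × ℕ, g' I X.2) = S (sh2 c) X := by
    have hsupp : Function.support (fun I : ℕ × ℕ => g' I X.2) ⊆
        Set.range (fun I : ℕ × ℕ => (I.1, I.2 + 1)) := by
      rintro ⟨a, b⟩ hI
      cases b with
      | zero => exfalso; apply hI; simp [hg']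
      | succ b => exact ⟨(a, b), rfl⟩
    have hre := inj2.tsum_eq (f := fun I : ℕ × ℕ => g' I X.2) hsupp
    rw [← hre]
    apply tsum_congr
    intro J
    show g' (J.1, J.2 + 1) X.2 = sh2 c J * X.1 ^ J.1 * X.2 ^ J.2
    simp only [hg', sh2, ← hx]
    push_cast
    ring_nf
  rw [← hsum_eq]
  exact H

lemma pd1_S {c : ℕ × ℕ → ℝ} (hc : Good c) : pd1R (S c) = S (sh1 c) := by
  funext X
  exact (hasDerivAt_S_fst hc X).deriv

lemma pd2_S {c : ℕ × ℕ → ℝ} (hc : Good c) : pd2R (S c) = S (sh2 c) := by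
  funext X
  exact (hasDerivAt_S_snd hc X).deriv

lemma good_sh1_iter {c : ℕ × ℕ → ℝ} (hc : Good c) (n : ℕ) : Good (sh1^[n] c) := by
  induction n with
  | zero => exact hc
  | succ n ih => rw [Function.iterate_succ_apply']; exact good_sh1 ih

lemma good_sh2_iter {c : ℕ × ℕ → ℝ} (hc : Good c) (n : ℕ) : Good (sh2^[n] c) := by
  induction n with
  | zero => exact hc
  | succ n ih => rw [Function.iterate_succ_apply']; exact good_sh2 ih

lemma pd1_iter_S {c : ℕ × ℕ → ℝ} (hc : Good c) (n : ℕ) :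
    pd1R^[n] (S c) = S (sh1^[n] c) := by
  induction n with
  | zero => rfl
  | succ n ih =>
      rw [Function.iterate_succ_apply', Function.iterate_succ_apply', ih,
        pd1_S (good_sh1_iter hc n)]

lemma pd2_iter_S {c : ℕ × ℕ → ℝ} (hc : Good c) (n : ℕ) :
    pd2R^[n] (S c) = S (sh2^[n] c) := by
  induction n with
  | zero => rfl
  | succ n ih =>
      rw [Function.iterate_succ_apply', Function.iterate_succ_apply', ih,
        pd2_S (good_sh2_iter hc n)]

lemma DIR_S {c : ℕ × ℕ → ℝ} (hc : Good c) (i₁ i₂ : ℕ) :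
    DIR i₁ i₂ (S c) = S (sh1^[i₁] (sh2^[i₂] c)) := by
  rw [DIR, pd2_iter_S hc i₂, pd1_iter_S (good_sh2_iter hc i₂) i₁]

/-- The majorant sum. -/
def T (c : ℕ × ℕ → ℝ) (M : ℝ) : ℝ := ∑' I : ℕ × ℕ, |c I| * M ^ (I.1 + I.2)

lemma summable_T {c : ℕ × ℕ → ℝ} (hc : Good c) {M : ℝ} (hM : 0 ≤ M) :
    Summable (fun I : ℕ × ℕ => |c I| * M ^ (I.1 + I.2)) := by
  refine Summable.of_nonneg_of_le (fun I => by positivity) (fun I => ?_)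
    (hc (M + 1) (by linarith))
  exact mul_le_mul_of_nonneg_left
    (pow_le_pow_left₀ hM (by linarith) _) (abs_nonneg _)

lemma abs_S_le {c : ℕ × ℕ → ℝ} (hc : Good c) {M : ℝ} {X : ℝ × ℝ}
    (h1 : |X.1| ≤ M) (h2 : |X.2| ≤ M) : |S c X| ≤ T c M := by
  have hM0 : (0:ℝ) ≤ M := le_trans (abs_nonneg _) h1
  have hs := good_summable_abs hc X
  have habs : |S c X| ≤ ∑' I : ℕ × ℕ, |c I * X.1 ^ I.1 * X.2 ^ I.2| := by
    have h := norm_tsum_le_tsum_norm (f := fun I : ℕ × ℕ => c I * X.1 ^ I.1 * X.2 ^ I.2)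
      (by simpa only [Real.norm_eq_abs] using hs)
    simpa only [Real.norm_eq_abs, S] using h
  refine le_trans habs (Summable.tsum_le_tsum (fun I => ?_) hs (summable_T hc hM0))
  calc |c I * X.1 ^ I.1 * X.2 ^ I.2| = |c I| * |X.1| ^ I.1 * |X.2| ^ I.2 := by
        rw [abs_mul, abs_mul, abs_pow, abs_pow]
    _ ≤ |c I| * M ^ I.1 * M ^ I.2 := by
        have e1 := pow_le_pow_left₀ (abs_nonneg X.1) h1 I.1
        have e2 := pow_le_pow_left₀ (abs_nonneg X.2) h2 I.2
        apply mul_le_mul (mul_le_mul le_rfl e1 (by positivity) (abs_nonneg _)) e2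
          (by positivity) (by positivity)
    _ = |c I| * M ^ (I.1 + I.2) := by rw [pow_add]; ring

lemma T_sh1_le {c : ℕ × ℕ → ℝ} (hc : Good c) {M : ℝ} (hM : 1 ≤ M) :
    T (sh1 c) M ≤ T c (2 * M) := by
  have hM0 : (0:ℝ) < M := lt_of_lt_of_le one_pos hM
  exact Summable.tsum_le_tsum_of_inj (fun I : ℕ × ℕ => (I.1 + 1, I.2)) inj1
    (fun J _ => by positivity) (fun I => sh1_term_le hM I)
    (good_sh1 hc M hM0) (hc (2 * M) (by positivity))

lemma T_sh2_le {c : ℕ × ℕ → ℝ} (hc : Good c) {M : ℝ} (hM : 1 ≤ M) :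
    T (sh2 c) M ≤ T c (2 * M) := by
  have hM0 : (0:ℝ) < M := lt_of_lt_of_le one_pos hM
  exact Summable.tsum_le_tsum_of_inj (fun I : ℕ × ℕ => (I.1, I.2 + 1)) inj2
    (fun J _ => by positivity) (fun I => sh2_term_le hM I)
    (good_sh2 hc M hM0) (hc (2 * M) (by positivity))

lemma T_sh1_iter_le {c : ℕ × ℕ → ℝ} (hc : Good c) {M : ℝ} (hM : 1 ≤ M) (n : ℕ) :
    T (sh1^[n] c) M ≤ T c (2 ^ n * M) := by
  induction n generalizing c with
  | zero => simp [one_mul]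
  | succ n ih =>
      have h1 : T (sh1^[n + 1] c) M = T (sh1^[n] (sh1 c)) M := by
        rw [Function.iterate_succ_apply]
      rw [h1]
      calc T (sh1^[n] (sh1 c)) M ≤ T (sh1 c) (2 ^ n * M) := ih (good_sh1 hc)
        _ ≤ T c (2 * (2 ^ n * M)) := T_sh1_le hc (by nlinarith [one_le_pow₀ (one_le_two (α := ℝ)) (n := n)])
        _ = T c (2 ^ (n + 1) * M) := by ring_nf

lemma T_sh2_iter_le {c : ℕ × ℕ → ℝ} (hc : Good c) {M : ℝ} (hM : 1 ≤ M) (n : ℕ) :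
    T (sh2^[n] c) M ≤ T c (2 ^ n * M) := by
  induction n generalizing c with
  | zero => simp [one_mul]
  | succ n ih =>
      rw [Function.iterate_succ_apply]
      calc T (sh2^[n] (sh2 c)) M ≤ T (sh2 c) (2 ^ n * M) := ih (good_sh2 hc)
        _ ≤ T c (2 * (2 ^ n * M)) := T_sh2_le hc (by nlinarith [one_le_pow₀ (one_le_two (α := ℝ)) (n := n)])
        _ = T c (2 ^ (n + 1) * M) := by ring_nf

lemma one_le_scaled {M : ℝ} (hM : 1 ≤ M) (n : ℕ) : 1 ≤ 2 ^ n * M := by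
  have : (1:ℝ) ≤ 2 ^ n := one_le_pow₀ one_le_two
  nlinarith

lemma T_iter_le {c : ℕ × ℕ → ℝ} (hc : Good c) {M : ℝ} (hM : 1 ≤ M) (i₁ i₂ : ℕ) :
    T (sh1^[i₁] (sh2^[i₂] c)) M ≤ T c (2 ^ (i₁ + i₂) * M) := by
  calc T (sh1^[i₁] (sh2^[i₂] c)) M ≤ T (sh2^[i₂] c) (2 ^ i₁ * M) :=
        T_sh1_iter_le (good_sh2_iter hc i₂) hM i₁
    _ ≤ T c (2 ^ i₂ * (2 ^ i₁ * M)) :=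
        T_sh2_iter_le hc (one_le_scaled hM i₁) i₂
    _ = T c (2 ^ (i₁ + i₂) * M) := by rw [pow_add]; ring_nf

lemma good_sub {a b : ℕ × ℕ → ℝ} (ha : Good a) (hb : Good b) :
    Good (fun I => a I - b I) := by
  intro r hr
  refine Summable.of_nonneg_of_le (fun I => by positivity) (fun I => ?_)
    ((ha r hr).add (hb r hr))
  have : |a I - b I| ≤ |a I| + |b I| := abs_sub _ _
  calc |a I - b I| * r ^ (I.1 + I.2) ≤ (|a I| + |b I|) * r ^ (I.1 + I.2) := by
        apply mul_le_mul_of_nonneg_right this (by positivity)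
    _ = |a I| * r ^ (I.1 + I.2) + |b I| * r ^ (I.1 + I.2) := by ring

lemma sh1_sub (a b : ℕ × ℕ → ℝ) :
    sh1 (fun I => a I - b I) = fun I => sh1 a I - sh1 b I := by
  funext I; simp [sh1, mul_sub]

lemma sh2_sub (a b : ℕ × ℕ → ℝ) :
    sh2 (fun I => a I - b I) = fun I => sh2 a I - sh2 b I := by
  funext I; simp [sh2, mul_sub]

lemma sh1_iter_sub (a b : ℕ × ℕ → ℝ) (n : ℕ) :
    sh1^[n] (fun I => a I - b I) = fun I => sh1^[n] a I - sh1^[n] b I := by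
  induction n generalizing a b with
  | zero => rfl
  | succ n ih =>
      rw [Function.iterate_succ_apply, Function.iterate_succ_apply,
        Function.iterate_succ_apply, sh1_sub, ih]

lemma sh2_iter_sub (a b : ℕ × ℕ → ℝ) (n : ℕ) :
    sh2^[n] (fun I => a I - b I) = fun I => sh2^[n] a I - sh2^[n] b I := by
  induction n generalizing a b with
  | zero => rfl
  | succ n ih =>
      rw [Function.iterate_succ_apply, Function.iterate_succ_apply,
        Function.iterate_succ_apply, sh2_sub, ih]

lemma S_sub {a b : ℕ × ℕ → ℝ} (ha : Good a) (hb : Good b) (X : ℝ × ℝ) :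
    S (fun I => a I - b I) X = S a X - S b X := by
  have h1 := good_summable ha X
  have h2 := good_summable hb X
  have : S (fun I => a I - b I) X
      = ∑' I : ℕ × ℕ, (a I * X.1 ^ I.1 * X.2 ^ I.2 - b I * X.1 ^ I.1 * X.2 ^ I.2) := by
    apply tsum_congr; intro I; ring
  rw [this, Summable.tsum_sub h1 h2]; rfl

end ConvAux

open ConvAux

/-- **Convergence Lemma.** If `(F_k)_{k≥1}` is a quadratic growth family, then the
rescaled functions `G_k(X) = F_k(k⁻²X)` converge in the `C^∞` topology to the affine
function `G(x₁,x₂) = F₁(0,0) + C₁·x₁ + C₂·x₂`: every partial derivative of `G_k`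
converges, uniformly on each compact subset of `ℝ²`, to the corresponding partial
derivative of `G`. -/
theorem convergence_lemma
    (F : ℕ → ℝ × ℝ → ℝ) (C : ℕ → ℕ × ℕ → ℝ)
    (hconv : ∀ k : ℕ, 1 ≤ k → ∀ X : ℝ × ℝ,
      HasSum (fun I : ℕ × ℕ => C k I * X.1 ^ I.1 * X.2 ^ I.2) (F k X))
    (habs : ∀ k : ℕ, 1 ≤ k → ∀ X : ℝ × ℝ,
      Summable (fun I : ℕ × ℕ => |C k I * X.1 ^ I.1 * X.2 ^ I.2|))
    (hconst : ∀ k : ℕ, 1 ≤ k → C k (0, 0) = C 1 (0, 0))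
    (C₁ C₂ : ℝ)
    (hC₁ : Tendsto (fun k : ℕ => C k (1, 0) * ((k : ℝ) ^ 2)⁻¹) atTop (nhds C₁))
    (hC₂ : Tendsto (fun k : ℕ => C k (0, 1) * ((k : ℝ) ^ 2)⁻¹) atTop (nhds C₂))
    (hε : ∃ ε : ℝ, 0 < ε ∧ Tendsto (fun k : ℕ =>
        ∑' I : ℕ × ℕ, if 2 ≤ I.1 + I.2 then
          |C k I| * (k : ℝ) ^ ((-2 + ε) * ((I.1 + I.2 : ℕ) : ℝ)) else 0)
      atTop (nhds 0))
    (G : ℕ → ℝ × ℝ → ℝ)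
    (hG : ∀ (k : ℕ) (X : ℝ × ℝ), G k X = F k ((((k : ℝ) ^ 2)⁻¹) • X)) :
    ∀ (i₁ i₂ : ℕ) (K : Set (ℝ × ℝ)), IsCompact K →
      TendstoUniformlyOn (fun k => DIR i₁ i₂ (G k))
        (DIR i₁ i₂ (fun X => F 1 (0, 0) + C₁ * X.1 + C₂ * X.2)) atTop K := by
  classical
  obtain ⟨ε, hε0, hεt⟩ := hε
  intro i₁ i₂ K hK
  set d : ℕ → ℕ × ℕ → ℝ := fun k I => C k I * (((k : ℝ) ^ 2)⁻¹) ^ (I.1 + I.2) with hd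
  set cinf : ℕ × ℕ → ℝ := fun I =>
    if I = (0, 0) then F 1 (0, 0) else if I = (1, 0) then C₁
      else if I = (0, 1) then C₂ else 0 with hcinf
  have hkpos : ∀ k : ℕ, 1 ≤ k → (0 : ℝ) < (k : ℝ) := by
    intro k hk; exact_mod_cast Nat.lt_of_lt_of_le Nat.zero_lt_one hk
  have hinvpos : ∀ k : ℕ, 1 ≤ k → (0 : ℝ) < (((k : ℝ) ^ 2)⁻¹) := by
    intro k hk; have := hkpos k hk; positivity
  have hGood_d : ∀ k : ℕ, 1 ≤ k → Good (d k) := by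
    intro k hk r hr
    have hinv := hinvpos k hk
    set q : ℝ := r * ((k : ℝ) ^ 2)⁻¹ with hq
    have hq0 : (0:ℝ) < q := by positivity
    refine ((habs k hk (q, q)).congr ?_)
    intro I
    show |C k I * q ^ I.1 * q ^ I.2| = |d k I| * r ^ (I.1 + I.2)
    rw [abs_mul, abs_mul, abs_pow, abs_pow, abs_of_nonneg hq0.le]
    simp only [hd, abs_mul, abs_pow, abs_of_nonneg hinv.le, hq]
    simp only [mul_pow, pow_add]
    ring
  have hGk : ∀ k : ℕ, 1 ≤ k → G k = S (d k) := by
    intro k hk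
    funext X
    rw [hG]
    have h := hconv k hk ((((k : ℝ) ^ 2)⁻¹) • X)
    have heq : (fun I : ℕ × ℕ => C k I * (((((k : ℝ) ^ 2)⁻¹) • X).1) ^ I.1 *
        (((((k : ℝ) ^ 2)⁻¹) • X).2) ^ I.2)
        = fun I : ℕ × ℕ => d k I * X.1 ^ I.1 * X.2 ^ I.2 := by
      funext I
      simp only [Prod.smul_fst, Prod.smul_snd, smul_eq_mul, hd, mul_pow, pow_add]
      ring
    rw [heq] at h
    exact (h.tsum_eq).symm
  have hcinf_zero : ∀ I : ℕ × ℕ,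
      I ∉ ({(0, 0), (1, 0), (0, 1)} : Finset (ℕ × ℕ)) → cinf I = 0 := by
    intro I hI
    simp only [Finset.mem_insert, Finset.mem_singleton, not_or] at hI
    simp only [hcinf, if_neg hI.1, if_neg hI.2.1, if_neg hI.2.2]
  have hGoodcinf : Good cinf := by
    intro r hr
    apply summable_of_ne_finset_zero (s := ({(0, 0), (1, 0), (0, 1)} : Finset (ℕ × ℕ)))
    intro I hI
    rw [hcinf_zero I hI, abs_zero, zero_mul]
  have hlim : (fun X : ℝ × ℝ => F 1 (0, 0) + C₁ * X.1 + C₂ * X.2) = S cinf := by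
    funext X
    rw [S, tsum_eq_sum (s := ({(0, 0), (1, 0), (0, 1)} : Finset (ℕ × ℕ)))
      (fun I hI => by rw [hcinf_zero I hI, zero_mul, zero_mul])]
    rw [show ({(0, 0), (1, 0), (0, 1)} : Finset (ℕ × ℕ))
        = insert (0, 0) (insert (1, 0) ({(0, 1)} : Finset (ℕ × ℕ))) from rfl]
    rw [Finset.sum_insert (by decide), Finset.sum_insert (by decide),
      Finset.sum_singleton]
    simp only [hcinf]
    norm_num
    ring
  have hF10 : C 1 (0, 0) = F 1 (0, 0) := by
    have h := hconv 1 le_rfl ((0 : ℝ), (0 : ℝ))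
    have heq : (fun I : ℕ × ℕ => C 1 I * (0 : ℝ) ^ I.1 * (0 : ℝ) ^ I.2)
        = fun I : ℕ × ℕ => if I = ((0 : ℕ), (0 : ℕ)) then C 1 (0, 0) else 0 := by
      funext I
      rcases I with ⟨a, b⟩
      match a, b with
      | 0, 0 => simp
      | 0, b + 1 => simp [zero_pow]
      | a + 1, b => simp [zero_pow]
    rw [heq] at h
    exact (hasSum_ite_eq ((0 : ℕ), (0 : ℕ)) (C 1 (0, 0))).unique h
  set e : ℕ → ℕ × ℕ → ℝ := fun k I => d k I - cinf I with he
  have hGood_e : ∀ k : ℕ, 1 ≤ k → Good (e k) := fun k hk =>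
    good_sub (hGood_d k hk) hGoodcinf
  obtain ⟨M0, hM0⟩ := hK.isBounded.subset_closedBall 0
  set M : ℝ := max M0 1 with hM
  have hM1 : (1 : ℝ) ≤ M := le_max_right _ _
  have hXK : ∀ X ∈ K, |X.1| ≤ M ∧ |X.2| ≤ M := by
    intro X hX
    have hXn : ‖X‖ ≤ M0 := by
      have := hM0 hX
      rwa [Metric.mem_closedBall, dist_zero_right] at this
    exact ⟨le_trans (le_trans (norm_fst_le X) hXn) (le_max_left _ _),
      le_trans (le_trans (norm_snd_le X) hXn) (le_max_left _ _)⟩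
  set A : ℝ := 2 ^ (i₁ + i₂) * M with hA
  have hA1 : (1 : ℝ) ≤ A := one_le_scaled hM1 _
  have hA0 : (0 : ℝ) < A := lt_of_lt_of_le one_pos hA1
  set b : ℕ → ℝ := fun k =>
    (|C k (1, 0) * ((k : ℝ) ^ 2)⁻¹ - C₁| + |C k (0, 1) * ((k : ℝ) ^ 2)⁻¹ - C₂|) * A
      + (∑' I : ℕ × ℕ, if 2 ≤ I.1 + I.2 then
          |C k I| * (k : ℝ) ^ ((-2 + ε) * ((I.1 + I.2 : ℕ) : ℝ)) else 0) with hbdef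
  have hblim : Tendsto b atTop (nhds 0) := by
    have h1 := (hC₁.sub (tendsto_const_nhds (x := C₁))).abs
    have h2 := (hC₂.sub (tendsto_const_nhds (x := C₂))).abs
    rw [sub_self, abs_zero] at h1 h2
    have h3 := ((h1.add h2).mul_const A).add hεt
    simpa [hbdef] using h3
  have hevA : ∀ᶠ k : ℕ in atTop, A ≤ (k : ℝ) ^ ε := by
    have h := (tendsto_rpow_atTop hε0).comp tendsto_natCast_atTop_atTop
    exact h.eventually_ge_atTop A
  have hmain : ∀ᶠ k : ℕ in atTop, ∀ X ∈ K,
      |DIR i₁ i₂ (G k) X -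
        DIR i₁ i₂ (fun X : ℝ × ℝ => F 1 (0, 0) + C₁ * X.1 + C₂ * X.2) X| ≤ b k := by
    filter_upwards [hevA, eventually_ge_atTop 1] with k hkA hk1
    intro X hX
    have hkR : (0 : ℝ) < (k : ℝ) := hkpos k hk1
    have hinv := hinvpos k hk1
    have hGek := hGood_e k hk1
    have hD1 : DIR i₁ i₂ (G k) = S (sh1^[i₁] (sh2^[i₂] (d k))) := by
      rw [hGk k hk1, DIR_S (hGood_d k hk1)]
    have hD2 : DIR i₁ i₂ (fun X : ℝ × ℝ => F 1 (0, 0) + C₁ * X.1 + C₂ * X.2)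
        = S (sh1^[i₁] (sh2^[i₂] cinf)) := by
      rw [hlim, DIR_S hGoodcinf]
    rw [hD1, hD2]
    have hsh : sh1^[i₁] (sh2^[i₂] (e k))
        = fun J => sh1^[i₁] (sh2^[i₂] (d k)) J - sh1^[i₁] (sh2^[i₂] cinf) J := by
      rw [show e k = fun I => d k I - cinf I from rfl, sh2_iter_sub, sh1_iter_sub]
    have hGdk := good_sh1_iter (good_sh2_iter (hGood_d k hk1) i₂) i₁
    have hGci := good_sh1_iter (good_sh2_iter hGoodcinf i₂) i₁
    have hdiff : S (sh1^[i₁] (sh2^[i₂] (d k))) X - S (sh1^[i₁] (sh2^[i₂] cinf)) X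
        = S (sh1^[i₁] (sh2^[i₂] (e k))) X := by
      rw [hsh, S_sub hGdk hGci]
    rw [hdiff]
    have step1 : |S (sh1^[i₁] (sh2^[i₂] (e k))) X| ≤ T (sh1^[i₁] (sh2^[i₂] (e k))) M :=
      abs_S_le (good_sh1_iter (good_sh2_iter hGek i₂) i₁) (hXK X hX).1 (hXK X hX).2
    have step2 : T (sh1^[i₁] (sh2^[i₂] (e k))) M ≤ T (e k) A := by
      rw [hA]; exact T_iter_le hGek hM1 i₁ i₂
    -- now estimate T (e k) A
    set u : ℕ × ℕ → ℝ := fun I =>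
      if I = ((1 : ℕ), (0 : ℕ)) then |C k (1, 0) * ((k : ℝ) ^ 2)⁻¹ - C₁| * A
      else if I = ((0 : ℕ), (1 : ℕ)) then |C k (0, 1) * ((k : ℝ) ^ 2)⁻¹ - C₂| * A
      else 0 with hu
    set v : ℕ × ℕ → ℝ := fun I =>
      if 2 ≤ I.1 + I.2 then |d k I| * A ^ (I.1 + I.2) else 0 with hv
    set w : ℕ × ℕ → ℝ := fun I =>
      if 2 ≤ I.1 + I.2 then
        |C k I| * (k : ℝ) ^ ((-2 + ε) * ((I.1 + I.2 : ℕ) : ℝ)) else 0 with hw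
    have hpt : ∀ I : ℕ × ℕ, |e k I| * A ^ (I.1 + I.2) ≤ u I + v I := by
      rintro ⟨a, b'⟩
      by_cases h00 : ((a, b') : ℕ × ℕ) = (0, 0)
      · simp only [Prod.mk.injEq] at h00
        obtain ⟨rfl, rfl⟩ := h00
        have he0 : e k (0, 0) = 0 := by
          have h1 : C k 0 = C 1 0 := hconst k hk1
          have h2 : C 1 0 = F 1 0 := hF10
          simp [he, hd, hcinf, h1, h2, hconst k hk1, hF10]
        rw [he0, abs_zero, zero_mul]
        have hu0 : u (0, 0) = 0 := by simp [hu, Prod.ext_iff]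
        have hv0 : v (0, 0) = 0 := by simp [hv]
        rw [hu0, hv0]; norm_num
      · by_cases h10 : ((a, b') : ℕ × ℕ) = (1, 0)
        · simp only [Prod.mk.injEq] at h10
          obtain ⟨rfl, rfl⟩ := h10
          have he1 : e k (1, 0) = C k (1, 0) * ((k : ℝ) ^ 2)⁻¹ - C₁ := by
            simp [he, hd, hcinf]
          have hu1 : u (1, 0) = |C k (1, 0) * ((k : ℝ) ^ 2)⁻¹ - C₁| * A := by
            simp [hu]
          have hv1 : v (1, 0) = 0 := by simp [hv]
          rw [he1, hu1, hv1, add_zero]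
          norm_num
        · by_cases h01 : ((a, b') : ℕ × ℕ) = (0, 1)
          · simp only [Prod.mk.injEq] at h01
            obtain ⟨rfl, rfl⟩ := h01
            have he1 : e k (0, 1) = C k (0, 1) * ((k : ℝ) ^ 2)⁻¹ - C₂ := by
              simp [he, hd, hcinf]
            have hu1 : u (0, 1) = |C k (0, 1) * ((k : ℝ) ^ 2)⁻¹ - C₂| * A := by
              simp [hu]
            have hv1 : v (0, 1) = 0 := by simp [hv]
            rw [he1, hu1, hv1, add_zero]
            norm_num
          · have hge2 : 2 ≤ a + b' := by
              simp only [Prod.mk.injEq] at h00 h10 h01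
              omega
            have hci : cinf (a, b') = 0 := by
              apply hcinf_zero
              simp only [Finset.mem_insert, Finset.mem_singleton, not_or]
              exact ⟨h00, h10, h01⟩
            have heab : e k (a, b') = d k (a, b') := by
              simp only [he, hci, sub_zero]
            have hu0 : u (a, b') = 0 := by
              simp only [hu, if_neg h10, if_neg h01]
            have hv2 : v (a, b') = |d k (a, b')| * A ^ (a + b') := by
              simp only [hv, if_pos hge2]
            rw [heab, hu0, hv2, zero_add]
    have hsum_u : Summable u := by
      apply summable_of_ne_finset_zero (s := ({(1, 0), (0, 1)} : Finset (ℕ × ℕ)))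
      intro I hI
      simp only [Finset.mem_insert, Finset.mem_singleton, not_or] at hI
      simp only [hu, if_neg hI.1, if_neg hI.2]
    have hsum_dA : Summable (fun I : ℕ × ℕ => |d k I| * A ^ (I.1 + I.2)) :=
      summable_T (hGood_d k hk1) hA0.le
    have hsum_v : Summable v := by
      refine Summable.of_nonneg_of_le (fun I => ?_) (fun I => ?_) hsum_dA
      · simp only [hv]; split <;> positivity
      · simp only [hv]; split
        · exact le_rfl
        · positivity
    have hTe : Summable (fun I : ℕ × ℕ => |e k I| * A ^ (I.1 + I.2)) :=
      summable_T hGek hA0.le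
    have hsplit : T (e k) A ≤ (∑' I : ℕ × ℕ, u I) + (∑' I : ℕ × ℕ, v I) := by
      rw [← Summable.tsum_add hsum_u hsum_v]
      exact Summable.tsum_le_tsum hpt hTe (hsum_u.add hsum_v)
    have hu_eq : (∑' I : ℕ × ℕ, u I)
        = (|C k (1, 0) * ((k : ℝ) ^ 2)⁻¹ - C₁| + |C k (0, 1) * ((k : ℝ) ^ 2)⁻¹ - C₂|) * A := by
      rw [tsum_eq_sum (s := ({(1, 0), (0, 1)} : Finset (ℕ × ℕ))) (fun I hI => by
        simp only [Finset.mem_insert, Finset.mem_singleton, not_or] at hI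
        simp only [hu, if_neg hI.1, if_neg hI.2])]
      rw [show ({(1, 0), (0, 1)} : Finset (ℕ × ℕ))
          = insert (1, 0) ({(0, 1)} : Finset (ℕ × ℕ)) from rfl]
      rw [Finset.sum_insert (by decide), Finset.sum_singleton]
      have e1 : u (1, 0) = |C k (1, 0) * ((k : ℝ) ^ 2)⁻¹ - C₁| * A := by
        simp [hu]
      have e2 : u (0, 1) = |C k (0, 1) * ((k : ℝ) ^ 2)⁻¹ - C₂| * A := by
        simp [hu]
      rw [e1, e2]; ring
    -- comparison with the hypothesis series
    set q : ℝ := (k : ℝ) ^ ((-2 + ε) : ℝ) with hqdef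
    have hq0 : (0 : ℝ) < q := Real.rpow_pos_of_pos hkR _
    have hkey : ((k : ℝ) ^ 2)⁻¹ * A ≤ q := by
      have h1 : ((k : ℝ) ^ 2)⁻¹ = (k : ℝ) ^ ((-2 : ℝ)) := by
        rw [Real.rpow_neg hkR.le]
        norm_num
      rw [h1, hqdef, Real.rpow_add hkR]
      exact mul_le_mul_of_nonneg_left hkA (Real.rpow_nonneg hkR.le _)
    have hrw : ∀ n : ℕ, q ^ n = (k : ℝ) ^ ((-2 + ε) * (n : ℝ)) := by
      intro n
      rw [hqdef, Real.rpow_mul hkR.le, Real.rpow_natCast]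
    have hvw : ∀ I : ℕ × ℕ, v I ≤ w I := by
      intro I
      simp only [hv, hw]
      split
      · rw [← hrw]
        have hdk : |d k I| = |C k I| * (((k : ℝ) ^ 2)⁻¹) ^ (I.1 + I.2) := by
          simp only [hd, abs_mul, abs_pow, abs_of_nonneg hinv.le]
        rw [hdk, mul_assoc, ← mul_pow]
        exact mul_le_mul_of_nonneg_left
          (pow_le_pow_left₀ (by positivity) hkey _) (abs_nonneg _)
      · exact le_rfl
    have hsum_w : Summable w := by
      have hcq : Summable (fun I : ℕ × ℕ => |C k I| * q ^ (I.1 + I.2)) := by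
        refine ((habs k hk1 (q, q)).congr ?_)
        intro I
        rw [abs_mul, abs_mul, abs_pow, abs_pow, abs_of_nonneg hq0.le, pow_add]
        ring
      refine Summable.of_nonneg_of_le (fun I => ?_) (fun I => ?_) hcq
      · simp only [hw]; split
        · have := Real.rpow_nonneg hkR.le ((-2 + ε) * ((I.1 + I.2 : ℕ) : ℝ))
          positivity
        · exact le_rfl
      · simp only [hw]; split
        · rw [← hrw]
        · positivity
    have hvw_sum : (∑' I : ℕ × ℕ, v I) ≤ ∑' I : ℕ × ℕ, w I :=
      Summable.tsum_le_tsum hvw hsum_v hsum_w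
    calc |S (sh1^[i₁] (sh2^[i₂] (e k))) X| ≤ T (sh1^[i₁] (sh2^[i₂] (e k))) M := step1
      _ ≤ T (e k) A := step2
      _ ≤ (∑' I : ℕ × ℕ, u I) + (∑' I : ℕ × ℕ, v I) := hsplit
      _ ≤ (|C k (1, 0) * ((k : ℝ) ^ 2)⁻¹ - C₁| + |C k (0, 1) * ((k : ℝ) ^ 2)⁻¹ - C₂|) * A
            + ∑' I : ℕ × ℕ, w I := by rw [hu_eq]; exact add_le_add_right hvw_sum _
      _ = b k := by simp only [hbdef, hw]
  rw [Metric.tendstoUniformlyOn_iff]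
  intro δ hδ
  have hbev : ∀ᶠ k : ℕ in atTop, b k < δ := hblim.eventually (gt_mem_nhds hδ)
  filter_upwards [hmain, hbev] with k hk1 hk2
  intro X hX
  rw [Real.dist_eq]
  calc |DIR i₁ i₂ (fun X : ℝ × ℝ => F 1 (0, 0) + C₁ * X.1 + C₂ * X.2) X -
        DIR i₁ i₂ (G k) X|
      = |DIR i₁ i₂ (G k) X -
          DIR i₁ i₂ (fun X : ℝ × ℝ => F 1 (0, 0) + C₁ * X.1 + C₂ * X.2) X| :=
        abs_sub_comm _ _
    _ ≤ b k := hk1 X hX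
    _ < δ := hk2


end
end

section
/- Under the stated hypotheses (in particular P#(X₀), Q#(X₀) and δ all real), for every multi-index I with |I| = 2 there exists a constant C such that for all k ≥ 1, | D_I F_k(0,0) | ≤ C·k³. -/
open Complex Real Filter

noncomputable section

namespace SOB

abbrev Co := ℂ × (ℤ × ℤ)

def e (V : ℤ × ℤ) (X : ℝ × ℝ) : ℂ :=
  Complex.exp (Complex.I * ((X.1 * (V.1 : ℝ) + X.2 * (V.2 : ℝ) : ℝ) : ℂ))

lemma e_add (V W : ℤ × ℤ) (X : ℝ × ℝ) : e (V + W) X = e V X * e W X := by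
  rw [e, e, e, ← Complex.exp_add]
  congr 1
  simp only [Prod.fst_add, Prod.snd_add]
  push_cast
  ring

lemma e_addX (V : ℤ × ℤ) (X Y : ℝ × ℝ) : e V (X + Y) = e V X * e V Y := by
  rw [e, e, e, ← Complex.exp_add]
  congr 1
  simp only [Prod.fst_add, Prod.snd_add]
  push_cast
  ring

lemma abs_e (V : ℤ × ℤ) (X : ℝ × ℝ) : ‖e V X‖ = 1 := by
  rw [e, Complex.norm_exp]
  simp [Complex.mul_re]

def TP (L : List Co) (X : ℝ × ℝ) : ℂ := (L.map fun p => p.1 * e p.2 X).sum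

lemma TP_cons (p : Co) (L : List Co) (X : ℝ × ℝ) :
    TP (p :: L) X = p.1 * e p.2 X + TP L X := by simp [TP]

lemma TP_append (L L' : List Co) (X : ℝ × ℝ) :
    TP (L ++ L') X = TP L X + TP L' X := by simp [TP]

def conjL (L : List Co) : List Co := L.map fun p => (starRingEnd ℂ p.1, -p.2)

lemma conj_e (V : ℤ × ℤ) (X : ℝ × ℝ) : starRingEnd ℂ (e V X) = e (-V) X := by
  rw [e, e, ← Complex.exp_conj]
  congr 1
  simp only [map_mul, Complex.conj_I, Complex.conj_ofReal, Prod.fst_neg, Prod.snd_neg]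
  push_cast
  ring

lemma TP_conj (L : List Co) (X : ℝ × ℝ) :
    starRingEnd ℂ (TP L X) = TP (conjL L) X := by
  induction L with
  | nil => simp [TP, conjL]
  | cons p L ih =>
    rw [TP_cons, map_add, map_mul, conj_e, ih]
    rfl

def mulL (L L' : List Co) : List Co :=
  L.flatMap fun p => L'.map fun q => (p.1 * q.1, p.2 + q.2)

lemma map_mul_TP (c : ℂ) (v : ℤ × ℤ) (L : List Co) (X : ℝ × ℝ) :
    TP (L.map fun q => (c * q.1, v + q.2)) X = (c * e v X) * TP L X := by
  induction L with
  | nil => simp [TP]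
  | cons q L ih =>
    rw [List.map_cons, TP_cons, TP_cons, ih, e_add]
    ring

lemma TP_mul (L L' : List Co) (X : ℝ × ℝ) :
    TP (mulL L L') X = TP L X * TP L' X := by
  induction L with
  | nil => simp [TP, mulL]
  | cons p L ih =>
    rw [mulL, List.flatMap_cons, TP_append, map_mul_TP, TP_cons]
    rw [show (L.flatMap fun p => L'.map fun q => (p.1 * q.1, p.2 + q.2)) = mulL L L' from rfl, ih]
    ring

lemma length_conjL (L : List Co) : (conjL L).length = L.length := by simp [conjL]

lemma length_mulL (L L' : List Co) : (mulL L L').length = L.length * L'.length := by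
  induction L with
  | nil => simp [mulL]
  | cons p L ih =>
    rw [mulL, List.flatMap_cons, List.length_append, List.length_map,
      show (L.flatMap fun p => L'.map fun q => (p.1 * q.1, p.2 + q.2)) = mulL L L' from rfl, ih]
    simp [Nat.succ_mul, Nat.add_comm]

def m1 (L : List Co) : List Co := L.map fun p => (p.1 * (Complex.I * (p.2.1 : ℂ)), p.2)
def m2 (L : List Co) : List Co := L.map fun p => (p.1 * (Complex.I * (p.2.2 : ℂ)), p.2)

lemma length_m1 (L : List Co) : (m1 L).length = L.length := by simp [m1]
lemma length_m2 (L : List Co) : (m2 L).length = L.length := by simp [m2]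

lemma hasDerivAt_TP1 (L : List Co) (x : ℝ × ℝ) :
    HasDerivAt (fun t => TP L (t, x.2)) (TP (m1 L) x) x.1 := by
  induction L with
  | nil => simpa [TP, m1] using hasDerivAt_const x.1 (0 : ℂ)
  | cons p L ih =>
    have h1 : HasDerivAt (fun t : ℝ => t * ((p.2.1 : ℤ) : ℝ) + x.2 * ((p.2.2 : ℤ) : ℝ))
        ((p.2.1 : ℤ) : ℝ) x.1 := by
      simpa using ((hasDerivAt_id x.1).mul_const ((p.2.1 : ℤ) : ℝ)).add_const
        (x.2 * ((p.2.2 : ℤ) : ℝ))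
    have h2 := (((h1.ofReal_comp).const_mul Complex.I).cexp).const_mul p.1
    have h3 := h2.add ih
    have hval : p.1 * (Complex.exp (Complex.I *
          ((x.1 * ((p.2.1 : ℤ) : ℝ) + x.2 * ((p.2.2 : ℤ) : ℝ) : ℝ) : ℂ)) *
          (Complex.I * (((p.2.1 : ℤ) : ℝ) : ℂ))) + TP (m1 L) x = TP (m1 (p :: L)) x := by
      rw [show m1 (p :: L) = (p.1 * (Complex.I * (p.2.1 : ℂ)), p.2) :: m1 L from rfl, TP_cons, e]
      push_cast
      ring
    rw [← hval]
    apply h3.congr_of_eventuallyEq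
    filter_upwards with t
    rw [TP_cons, e]
    rfl

lemma hasDerivAt_TP2 (L : List Co) (x : ℝ × ℝ) :
    HasDerivAt (fun t => TP L (x.1, t)) (TP (m2 L) x) x.2 := by
  induction L with
  | nil => simpa [TP, m2] using hasDerivAt_const x.2 (0 : ℂ)
  | cons p L ih =>
    have h1 : HasDerivAt (fun t : ℝ => x.1 * ((p.2.1 : ℤ) : ℝ) + t * ((p.2.2 : ℤ) : ℝ))
        ((p.2.2 : ℤ) : ℝ) x.2 := by
      simpa using (((hasDerivAt_id x.2).mul_const ((p.2.2 : ℤ) : ℝ)).const_add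
        (x.1 * ((p.2.1 : ℤ) : ℝ)))
    have h2 := (((h1.ofReal_comp).const_mul Complex.I).cexp).const_mul p.1
    have h3 := h2.add ih
    have hval : p.1 * (Complex.exp (Complex.I *
          ((x.1 * ((p.2.1 : ℤ) : ℝ) + x.2 * ((p.2.2 : ℤ) : ℝ) : ℝ) : ℂ)) *
          (Complex.I * (((p.2.2 : ℤ) : ℝ) : ℂ))) + TP (m2 L) x = TP (m2 (p :: L)) x := by
      rw [show m2 (p :: L) = (p.1 * (Complex.I * (p.2.2 : ℂ)), p.2) :: m2 L from rfl, TP_cons, e]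
      push_cast
      ring
    rw [← hval]
    apply h3.congr_of_eventuallyEq
    filter_upwards with t
    rw [TP_cons, e]
    rfl

lemma hasDerivAt_re1 (L : List Co) (x : ℝ × ℝ) :
    HasDerivAt (fun t => (TP L (t, x.2)).re) ((TP (m1 L) x).re) x.1 :=
  Complex.reCLM.hasFDerivAt.comp_hasDerivAt x.1 (hasDerivAt_TP1 L x)

lemma hasDerivAt_im1 (L : List Co) (x : ℝ × ℝ) :
    HasDerivAt (fun t => (TP L (t, x.2)).im) ((TP (m1 L) x).im) x.1 :=
  Complex.imCLM.hasFDerivAt.comp_hasDerivAt x.1 (hasDerivAt_TP1 L x)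

lemma hasDerivAt_re2 (L : List Co) (x : ℝ × ℝ) :
    HasDerivAt (fun t => (TP L (x.1, t)).re) ((TP (m2 L) x).re) x.2 :=
  Complex.reCLM.hasFDerivAt.comp_hasDerivAt x.2 (hasDerivAt_TP2 L x)

lemma hasDerivAt_im2 (L : List Co) (x : ℝ × ℝ) :
    HasDerivAt (fun t => (TP L (x.1, t)).im) ((TP (m2 L) x).im) x.2 :=
  Complex.imCLM.hasFDerivAt.comp_hasDerivAt x.2 (hasDerivAt_TP2 L x)

/-- sum of products of re/im parts -/
def SP (P : List (List Co × List Co)) (X : ℝ × ℝ) : ℝ :=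
  (P.map fun q => (TP q.1 X).re * (TP q.2 X).im).sum

def Gf (L : List Co) (P : List (List Co × List Co)) (X : ℝ × ℝ) : ℝ :=
  (TP L X).im + SP P X

def pP (d : List Co → List Co) (P : List (List Co × List Co)) : List (List Co × List Co) :=
  P.flatMap fun q => [(d q.1, q.2), (q.1, d q.2)]

lemma SP_cons (q : List Co × List Co) (P : List (List Co × List Co)) (X : ℝ × ℝ) :
    SP (q :: P) X = (TP q.1 X).re * (TP q.2 X).im + SP P X := by simp [SP]

lemma hasDerivAt_SP1 (P : List (List Co × List Co)) (x : ℝ × ℝ) :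
    HasDerivAt (fun t => SP P (t, x.2)) (SP (pP m1 P) x) x.1 := by
  induction P with
  | nil => simpa [SP, pP] using hasDerivAt_const x.1 (0 : ℝ)
  | cons q P ih =>
    have h := ((hasDerivAt_re1 q.1 x).mul (hasDerivAt_im1 q.2 x)).add ih
    have hval : SP (pP m1 (q :: P)) x =
        (TP (m1 q.1) x).re * (TP q.2 x).im + (TP q.1 x).re * (TP (m1 q.2) x).im
          + SP (pP m1 P) x := by
      rw [show pP m1 (q :: P) = (m1 q.1, q.2) :: (q.1, m1 q.2) :: pP m1 P from rfl,
        SP_cons, SP_cons]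
      ring
    rw [hval]
    apply h.congr_of_eventuallyEq
    filter_upwards with t
    rw [SP_cons]
    rfl

lemma hasDerivAt_SP2 (P : List (List Co × List Co)) (x : ℝ × ℝ) :
    HasDerivAt (fun t => SP P (x.1, t)) (SP (pP m2 P) x) x.2 := by
  induction P with
  | nil => simpa [SP, pP] using hasDerivAt_const x.2 (0 : ℝ)
  | cons q P ih =>
    have h := ((hasDerivAt_re2 q.1 x).mul (hasDerivAt_im2 q.2 x)).add ih
    have hval : SP (pP m2 (q :: P)) x =
        (TP (m2 q.1) x).re * (TP q.2 x).im + (TP q.1 x).re * (TP (m2 q.2) x).im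
          + SP (pP m2 P) x := by
      rw [show pP m2 (q :: P) = (m2 q.1, q.2) :: (q.1, m2 q.2) :: pP m2 P from rfl,
        SP_cons, SP_cons]
      ring
    rw [hval]
    apply h.congr_of_eventuallyEq
    filter_upwards with t
    rw [SP_cons]
    rfl

lemma pd1R_Gf (L : List Co) (P : List (List Co × List Co)) :
    pd1R (Gf L P) = Gf (m1 L) (pP m1 P) := by
  funext x
  exact ((hasDerivAt_im1 L x).add (hasDerivAt_SP1 P x)).deriv

lemma pd2R_Gf (L : List Co) (P : List (List Co × List Co)) :
    pd2R (Gf L P) = Gf (m2 L) (pP m2 P) := by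
  funext x
  exact ((hasDerivAt_im2 L x).add (hasDerivAt_SP2 P x)).deriv

lemma TP_abs_le (L : List Co) (B : ℝ) (h : ∀ p ∈ L, ‖p.1‖ ≤ B) (X : ℝ × ℝ) :
    ‖TP L X‖ ≤ L.length * B := by
  induction L with
  | nil => simp [TP]
  | cons p L ih =>
    rw [TP_cons]
    calc ‖p.1 * e p.2 X + TP L X‖
        ≤ ‖p.1 * e p.2 X‖ + ‖TP L X‖ := norm_add_le _ _
      _ ≤ B + L.length * B := by
          refine add_le_add ?_ (ih fun q hq => h q (List.mem_cons_of_mem _ hq))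
          rw [norm_mul, abs_e, mul_one]
          exact h p List.mem_cons_self
      _ = (p :: L).length * B := by
          simp [List.length_cons]
          ring

/-- coefficient/frequency bounds for a list -/
def Bnd (L : List Co) (B W : ℝ) : Prop :=
  0 ≤ B ∧ 0 ≤ W ∧ ∀ p ∈ L, ‖p.1‖ ≤ B ∧ |((p.2.1 : ℤ) : ℝ)| ≤ W ∧ |((p.2.2 : ℤ) : ℝ)| ≤ W

lemma Bnd.mono {L B W B' W'} (h : Bnd L B W) (hB : B ≤ B') (hW : W ≤ W') : Bnd L B' W' :=
  ⟨h.1.trans hB, h.2.1.trans hW, fun p hp =>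
    ⟨((h.2.2 p hp).1).trans hB, ((h.2.2 p hp).2.1).trans hW, ((h.2.2 p hp).2.2).trans hW⟩⟩

lemma Bnd.d1 {L B W} (h : Bnd L B W) : Bnd (m1 L) (B * W) W := by
  refine ⟨mul_nonneg h.1 h.2.1, h.2.1, ?_⟩
  rintro p hp
  rw [SOB.m1, List.mem_map] at hp
  obtain ⟨q, hq, rfl⟩ := hp
  obtain ⟨h1, h2, h3⟩ := h.2.2 q hq
  refine ⟨?_, h2, h3⟩
  rw [norm_mul, norm_mul, Complex.norm_I, one_mul, Complex.norm_intCast]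
  exact mul_le_mul h1 h2 (abs_nonneg _) h.1

lemma Bnd.d2 {L B W} (h : Bnd L B W) : Bnd (m2 L) (B * W) W := by
  refine ⟨mul_nonneg h.1 h.2.1, h.2.1, ?_⟩
  rintro p hp
  rw [SOB.m2, List.mem_map] at hp
  obtain ⟨q, hq, rfl⟩ := hp
  obtain ⟨h1, h2, h3⟩ := h.2.2 q hq
  refine ⟨?_, h2, h3⟩
  rw [norm_mul, norm_mul, Complex.norm_I, one_mul, Complex.norm_intCast]
  exact mul_le_mul h1 h3 (abs_nonneg _) h.1

lemma Bnd.cj {L B W} (h : Bnd L B W) : Bnd (conjL L) B W := by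
  refine ⟨h.1, h.2.1, ?_⟩
  rintro p hp
  rw [SOB.conjL, List.mem_map] at hp
  obtain ⟨q, hq, rfl⟩ := hp
  obtain ⟨h1, h2, h3⟩ := h.2.2 q hq
  refine ⟨by simpa using h1, ?_, ?_⟩
  · simpa using h2
  · simpa using h3

lemma Bnd.ml {L B W L' B' W'} (h : Bnd L B W) (h' : Bnd L' B' W') :
    Bnd (mulL L L') (B * B') (W + W') := by
  refine ⟨mul_nonneg h.1 h'.1, add_nonneg h.2.1 h'.2.1, ?_⟩
  rintro p hp
  rw [SOB.mulL, List.mem_flatMap] at hp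
  obtain ⟨q, hq, hp⟩ := hp
  rw [List.mem_map] at hp
  obtain ⟨r, hr, rfl⟩ := hp
  obtain ⟨h1, h2, h3⟩ := h.2.2 q hq
  obtain ⟨h1', h2', h3'⟩ := h'.2.2 r hr
  refine ⟨by rw [norm_mul]; exact mul_le_mul h1 h1' (norm_nonneg _) h.1, ?_, ?_⟩
  · rw [Prod.fst_add]
    push_cast
    exact (abs_add_le _ _).trans (add_le_add h2 h2')
  · rw [Prod.snd_add]
    push_cast
    exact (abs_add_le _ _).trans (add_le_add h3 h3')

lemma Bnd.app {L L' B W} (h : Bnd L B W) (h' : Bnd L' B W) : Bnd (L ++ L') B W := by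
  refine ⟨h.1, h.2.1, ?_⟩
  rintro p hp
  rcases List.mem_append.1 hp with hp | hp
  exacts [h.2.2 p hp, h'.2.2 p hp]

lemma Bnd_exists (L : List Co) : ∃ B W, 1 ≤ B ∧ 1 ≤ W ∧ Bnd L B W := by
  induction L with
  | nil => exact ⟨1, 1, le_refl _, le_refl _, zero_le_one, zero_le_one, by simp⟩
  | cons p L ih =>
    obtain ⟨B, W, hB, hW, h⟩ := ih
    refine ⟨max B ‖p.1‖, max W (max |((p.2.1 : ℤ) : ℝ)| |((p.2.2 : ℤ) : ℝ)|),
      hB.trans (le_max_left _ _), hW.trans (le_max_left _ _),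
      le_trans h.1 (le_max_left _ _), le_trans h.2.1 (le_max_left _ _), ?_⟩
    rintro q hq
    rcases List.mem_cons.1 hq with rfl | hq
    · exact ⟨le_max_right _ _,
        le_trans (le_max_left _ _) (le_max_right _ _),
        le_trans (le_max_right _ _) (le_max_right _ _)⟩
    · obtain ⟨h1, h2, h3⟩ := h.2.2 q hq
      exact ⟨h1.trans (le_max_left _ _), h2.trans (le_max_left _ _), h3.trans (le_max_left _ _)⟩

lemma im_TP_le {L B W} (h : Bnd L B W) (X : ℝ × ℝ) :
    |(TP L X).im| ≤ L.length * B :=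
  (Complex.abs_im_le_norm _).trans (TP_abs_le L B (fun p hp => (h.2.2 p hp).1) X)

lemma re_TP_le {L B W} (h : Bnd L B W) (X : ℝ × ℝ) :
    |(TP L X).re| ≤ L.length * B :=
  (Complex.abs_re_le_norm _).trans (TP_abs_le L B (fun p hp => (h.2.2 p hp).1) X)

def EkL (M₁ M₂ : ℤ) (k : ℕ) : List Co :=
  (List.range k).map fun j : ℕ => ((1 : ℂ), ((j : ℤ) * M₁, (j : ℤ) * M₂))

lemma length_EkL (M₁ M₂ : ℤ) (k : ℕ) : (EkL M₁ M₂ k).length = k := by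
  rw [EkL, List.length_map, List.length_range]

lemma TP_EkL_succ (M₁ M₂ : ℤ) (k : ℕ) (X : ℝ × ℝ) :
    TP (EkL M₁ M₂ (k + 1)) X = TP (EkL M₁ M₂ k) X + e ((k : ℤ) * M₁, (k : ℤ) * M₂) X := by
  rw [EkL, List.range_succ, List.map_append, TP_append]
  simp [EkL, TP]

lemma Bnd_EkL (M₁ M₂ : ℤ) (k : ℕ) (WM : ℝ) (hWM : 0 ≤ WM)
    (h1 : |(M₁ : ℝ)| ≤ WM) (h2 : |(M₂ : ℝ)| ≤ WM) :
    Bnd (EkL M₁ M₂ k) 1 ((k : ℝ) * WM) := by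
  refine ⟨zero_le_one, mul_nonneg (Nat.cast_nonneg k) hWM, ?_⟩
  rintro p hp
  rw [EkL, List.mem_map] at hp
  obtain ⟨j, hj, rfl⟩ := hp
  rw [List.mem_range] at hj
  have hjk : (j : ℝ) ≤ (k : ℝ) := by exact_mod_cast hj.le
  refine ⟨by simp, ?_, ?_⟩
  · show |(((j : ℤ) * M₁ : ℤ) : ℝ)| ≤ (k : ℝ) * WM
    push_cast
    rw [abs_mul, Nat.abs_cast]
    exact mul_le_mul hjk h1 (abs_nonneg _) (Nat.cast_nonneg k)
  · show |(((j : ℤ) * M₂ : ℤ) : ℝ)| ≤ (k : ℝ) * WM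
    push_cast
    rw [abs_mul, Nat.abs_cast]
    exact mul_le_mul hjk h2 (abs_nonneg _) (Nat.cast_nonneg k)

def L0 (A : ℤ × ℤ → ℤ) (hA : (Function.support A).Finite) (X₀ : ℝ × ℝ) : List Co :=
  hA.toFinset.toList.map fun V => ((A V : ℂ) * e V X₀, V)

lemma supp_sub (A : ℤ × ℤ → ℤ) (Y : ℝ × ℝ) :
    (Function.support fun V => (A V : ℂ) * e V Y) ⊆ Function.support A := by
  intro V hV
  rw [Function.mem_support] at hV ⊢
  intro h0
  apply hV
  rw [h0]
  simp

lemma supp_fin {A : ℤ × ℤ → ℤ} (hA : (Function.support A).Finite) (Y : ℝ × ℝ) :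
    (Function.support fun V => (A V : ℂ) * e V Y).Finite :=
  Set.Finite.subset hA (supp_sub A Y)

lemma trigSum_eq_TP (A : ℤ × ℤ → ℤ) (hA : (Function.support A).Finite) (X₀ X : ℝ × ℝ) :
    trigSum A (X₀ + X) = TP (L0 A hA X₀) X := by
  rw [show trigSum A (X₀ + X) = ∑ᶠ V : ℤ × ℤ, (A V : ℂ) * e V (X₀ + X) from rfl]
  rw [finsum_eq_sum_of_support_subset (s := hA.toFinset) _
    (by rw [Set.Finite.coe_toFinset]; exact supp_sub A (X₀ + X))]
  rw [L0, TP, List.map_map, Finset.sum_map_toList]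
  refine Finset.sum_congr rfl fun V _ => ?_
  rw [show ((fun p : Co => p.1 * e p.2 X) ∘ fun V : ℤ × ℤ => ((A V : ℂ) * e V X₀, V)) V =
    ((A V : ℂ) * e V X₀) * e V X from rfl]
  rw [mul_assoc, ← e_addX]

lemma e_X0_one (M₁ M₂ : ℤ) (X₀ : ℝ × ℝ) (m : ℤ)
    (hm : X₀.1 * (M₁ : ℝ) + X₀.2 * (M₂ : ℝ) = 2 * Real.pi * (m : ℝ)) (k : ℕ) :
    e ((k : ℤ) * M₁, (k : ℤ) * M₂) X₀ = 1 := by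
  show Complex.exp (Complex.I *
    ((X₀.1 * (((k : ℤ) * M₁ : ℤ) : ℝ) + X₀.2 * (((k : ℤ) * M₂ : ℤ) : ℝ) : ℝ) : ℂ)) = 1
  have h1 : (X₀.1 * (((k : ℤ) * M₁ : ℤ) : ℝ) + X₀.2 * (((k : ℤ) * M₂ : ℤ) : ℝ)) =
      (k : ℝ) * (2 * Real.pi * (m : ℝ)) := by
    push_cast
    linear_combination (k : ℝ) * hm
  rw [h1]
  have h2 : Complex.I * (((k : ℝ) * (2 * Real.pi * (m : ℝ)) : ℝ) : ℂ) =
      (((k : ℤ) * m : ℤ) : ℂ) * (2 * (Real.pi : ℂ) * Complex.I) := by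
    push_cast
    ring
  rw [h2, Complex.exp_int_mul_two_pi_mul_I]

lemma trigSum_succ (M₁ M₂ : ℤ) (A : ℕ → ℤ × ℤ → ℤ) (S : ℤ × ℤ → ℤ)
    (hAfin : ∀ k, (Function.support (A k)).Finite) (hSfin : (Function.support S).Finite)
    (hg : LinearGrowth M₁ M₂ A S) (k : ℕ) (Y : ℝ × ℝ) :
    trigSum (A (k + 1)) Y = trigSum (A k) Y +
      e ((k : ℤ) * M₁, (k : ℤ) * M₂) Y * trigSum S Y := by
  set a : ℤ × ℤ := ((k : ℤ) * M₁, (k : ℤ) * M₂) with ha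
  have h1 : ∀ V : ℤ × ℤ, ((A (k + 1) V : ℂ)) * e V Y =
      (A k V : ℂ) * e V Y + (S (V - a) : ℂ) * e V Y := by
    intro V
    rw [hg k V, show ((V.1 - (k : ℤ) * M₁, V.2 - (k : ℤ) * M₂) : ℤ × ℤ) = V - a from rfl]
    push_cast
    ring
  have hfin2 : (Function.support fun V : ℤ × ℤ => (S (V - a) : ℂ) * e V Y).Finite := by
    refine (hSfin.image (fun W => W + a)).subset ?_
    intro V hV
    have hS : S (V - a) ≠ 0 := by
      intro h0
      apply hV
      show (S (V - a) : ℂ) * e V Y = 0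
      rw [h0]
      simp
    exact ⟨V - a, hS, by simp⟩
  have hshift : ∑ᶠ V : ℤ × ℤ, (S (V - a) : ℂ) * e V Y = (trigSum S Y) * e a Y := by
    have h2 := finsum_comp_equiv (Equiv.addRight a)
      (f := fun V : ℤ × ℤ => (S (V - a) : ℂ) * e V Y)
    rw [← h2]
    have h3 : ∀ W : ℤ × ℤ, (S ((Equiv.addRight a) W - a) : ℂ) * e ((Equiv.addRight a) W) Y =
        ((S W : ℂ) * e W Y) * e a Y := by
      intro W
      rw [show (Equiv.addRight a) W = W + a from rfl, add_sub_cancel_right, e_add]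
      ring
    rw [finsum_congr h3, ← finsum_mul _ _]
    rfl
  calc trigSum (A (k + 1)) Y = ∑ᶠ V : ℤ × ℤ, (A (k + 1) V : ℂ) * e V Y := rfl
    _ = ∑ᶠ V : ℤ × ℤ, ((A k V : ℂ) * e V Y + (S (V - a) : ℂ) * e V Y) := finsum_congr h1
    _ = (∑ᶠ V : ℤ × ℤ, (A k V : ℂ) * e V Y) + ∑ᶠ V : ℤ × ℤ, (S (V - a) : ℂ) * e V Y :=
        finsum_add_distrib (supp_fin (hAfin k) Y) hfin2
    _ = trigSum (A k) Y + e a Y * trigSum S Y := by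
        rw [hshift, show trigSum (A k) Y = ∑ᶠ V : ℤ × ℤ, (A k V : ℂ) * e V Y from rfl]
        ring

lemma growth_TP (M₁ M₂ : ℤ) (X₀ : ℝ × ℝ) (m : ℤ)
    (hm : X₀.1 * (M₁ : ℝ) + X₀.2 * (M₂ : ℝ) = 2 * Real.pi * (m : ℝ))
    (A : ℕ → ℤ × ℤ → ℤ) (S : ℤ × ℤ → ℤ)
    (hAfin : ∀ k, (Function.support (A k)).Finite) (hSfin : (Function.support S).Finite)
    (hg : LinearGrowth M₁ M₂ A S) (k : ℕ) (X : ℝ × ℝ) :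
    trigSum (A k) (X₀ + X) =
      TP (L0 (A 0) (hAfin 0) X₀) X + TP (EkL M₁ M₂ k) X * TP (L0 S hSfin X₀) X := by
  induction k with
  | zero => rw [trigSum_eq_TP (A 0) (hAfin 0)]; simp [EkL, TP]
  | succ k ih =>
    rw [trigSum_succ M₁ M₂ A S hAfin hSfin hg k (X₀ + X), ih,
      trigSum_eq_TP S hSfin, TP_EkL_succ, e_addX, e_X0_one M₁ M₂ X₀ m hm]
    ring

lemma im_decomp (A A' B B' z : ℂ) :
    ((A + z * B) * (starRingEnd ℂ) (A' + z * B')).im =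
      (A * (starRingEnd ℂ) A' + z * (B * (starRingEnd ℂ) A') +
        (starRingEnd ℂ) z * (A * (starRingEnd ℂ) B')).im +
      (z * (starRingEnd ℂ) z).re * (B * (starRingEnd ℂ) B').im := by
  have h : (A + z * B) * (starRingEnd ℂ) (A' + z * B') =
      (A * (starRingEnd ℂ) A' + z * (B * (starRingEnd ℂ) A') +
        (starRingEnd ℂ) z * (A * (starRingEnd ℂ) B')) +
        (z * (starRingEnd ℂ) z) * (B * (starRingEnd ℂ) B') := by
    rw [map_add, map_mul]
    ring
  rw [h, Complex.add_im]
  congr 1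
  rw [Complex.mul_im, show (z * (starRingEnd ℂ) z).im = 0 from by
    rw [Complex.mul_conj]; exact Complex.ofReal_im _]
  ring

lemma prod_bound {a b A B : ℝ} (ha : |a| ≤ A) (hb : |b| ≤ B) : |a * b| ≤ A * B := by
  rw [abs_mul]
  exact mul_le_mul ha hb (abs_nonneg _) ((abs_nonneg a).trans ha)

end SOB

namespace SOB

def bigL (M₁ M₂ : ℤ) (LP0 LQ0 LPsh LQsh : List Co) (k : ℕ) : List Co :=
  (mulL LP0 (conjL LQ0) ++ mulL (EkL M₁ M₂ k) (mulL LPsh (conjL LQ0))) ++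
    mulL (conjL (EkL M₁ M₂ k)) (mulL LP0 (conjL LQsh))

def LuL (M₁ M₂ : ℤ) (k : ℕ) : List Co := mulL (EkL M₁ M₂ k) (conjL (EkL M₁ M₂ k))

lemma decomp_F (M₁ M₂ : ℤ) (LP0 LQ0 LPsh LQsh : List Co) (k : ℕ) (X : ℝ × ℝ)
    (P Q : ℂ) (hP : P = TP LP0 X + TP (EkL M₁ M₂ k) X * TP LPsh X)
    (hQ : Q = TP LQ0 X + TP (EkL M₁ M₂ k) X * TP LQsh X) :
    (P * (starRingEnd ℂ) Q).im =
      Gf (bigL M₁ M₂ LP0 LQ0 LPsh LQsh k) [(LuL M₁ M₂ k, mulL LPsh (conjL LQsh))] X := by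
  subst hP hQ
  rw [im_decomp]
  simp only [TP_conj, ← TP_mul, ← TP_append]
  simp [Gf, SP, bigL, LuL]

lemma DIR_cases (i₁ i₂ : ℕ) (h : i₁ + i₂ = 2) (L : List Co) (P : List (List Co × List Co)) :
    ∃ da db : List Co → List Co, (da = m1 ∨ da = m2) ∧ (db = m1 ∨ db = m2) ∧
      DIR i₁ i₂ (Gf L P) = Gf (da (db L)) (pP da (pP db P)) := by
  have hle : i₁ ≤ 2 := by omega
  interval_cases i₁
  · have h2 : i₂ = 2 := by omega
    subst h2
    refine ⟨m2, m2, Or.inr rfl, Or.inr rfl, ?_⟩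
    show pd2R (pd2R (Gf L P)) = _
    rw [pd2R_Gf, pd2R_Gf]
  · have h2 : i₂ = 1 := by omega
    subst h2
    refine ⟨m1, m2, Or.inl rfl, Or.inr rfl, ?_⟩
    show pd1R (pd2R (Gf L P)) = _
    rw [pd2R_Gf, pd1R_Gf]
  · have h2 : i₂ = 0 := by omega
    subst h2
    refine ⟨m1, m1, Or.inl rfl, Or.inl rfl, ?_⟩
    show pd1R (pd1R (Gf L P)) = _
    rw [pd1R_Gf, pd1R_Gf]

lemma Bnd_d {d : List Co → List Co} (hd : d = m1 ∨ d = m2) {L B W} (h : Bnd L B W) :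
    Bnd (d L) (B * W) W := by
  rcases hd with rfl | rfl
  exacts [h.d1, h.d2]

lemma length_d {d : List Co → List Co} (hd : d = m1 ∨ d = m2) (L : List Co) :
    (d L).length = L.length := by
  rcases hd with rfl | rfl
  exacts [length_m1 L, length_m2 L]

lemma abs_add4 (a b c d : ℝ) : |a + b + c + d| ≤ |a| + |b| + |c| + |d| := by
  calc |a + b + c + d| ≤ |a + b + c| + |d| := abs_add_le _ _
    _ ≤ |a + b| + |c| + |d| := by gcongr; exact abs_add_le _ _
    _ ≤ |a| + |b| + |c| + |d| := by gcongr; exact abs_add_le _ _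

end SOB
namespace SOB

lemma pP_pair (da db : List Co → List Co) (a b : List Co) :
    pP da (pP db [(a, b)]) =
      [(da (db a), b), (db a, da b), (da a, db b), (a, da (db b))] := rfl

set_option maxHeartbeats 2000000 in
lemma main_bound (M₁ M₂ : ℤ) (LP0 LQ0 LPsh LQsh : List Co)
    (hh : (TP (mulL LPsh (conjL LQsh)) ((0 : ℝ), (0 : ℝ))).im = 0) :
    ∃ C : ℝ, ∀ da db : List Co → List Co, (da = m1 ∨ da = m2) → (db = m1 ∨ db = m2) →
      ∀ k : ℕ, 1 ≤ k →
      |Gf (da (db (bigL M₁ M₂ LP0 LQ0 LPsh LQsh k)))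
        (pP da (pP db [(LuL M₁ M₂ k, mulL LPsh (conjL LQsh))])) ((0 : ℝ), (0 : ℝ))| ≤
        C * (k : ℝ) ^ 3 := by
  obtain ⟨BP, WP, hBP, hWP, hP⟩ := Bnd_exists LP0
  obtain ⟨BQ, WQ, hBQ, hWQ, hQ⟩ := Bnd_exists LQ0
  obtain ⟨BS, WS, hBS, hWS, hS⟩ := Bnd_exists LPsh
  obtain ⟨BT, WT, hBT, hWT, hT⟩ := Bnd_exists LQsh
  set B₀ : ℝ := max (max BP BQ) (max BS BT) with hB₀def
  set W₀ : ℝ := max (max WP WQ) (max WS WT) with hW₀def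
  have hB₀1 : (1 : ℝ) ≤ B₀ := hBP.trans ((le_max_left _ _).trans (le_max_left _ _))
  have hW₀1 : (1 : ℝ) ≤ W₀ := hWP.trans ((le_max_left _ _).trans (le_max_left _ _))
  have hB₀0 : (0 : ℝ) ≤ B₀ := zero_le_one.trans hB₀1
  have hW₀0 : (0 : ℝ) ≤ W₀ := zero_le_one.trans hW₀1
  have hP' : Bnd LP0 B₀ W₀ :=
    hP.mono ((le_max_left _ _).trans (le_max_left _ _)) ((le_max_left _ _).trans (le_max_left _ _))
  have hQ' : Bnd LQ0 B₀ W₀ :=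
    hQ.mono ((le_max_right _ _).trans (le_max_left _ _))
      ((le_max_right _ _).trans (le_max_left _ _))
  have hS' : Bnd LPsh B₀ W₀ :=
    hS.mono ((le_max_left _ _).trans (le_max_right _ _))
      ((le_max_left _ _).trans (le_max_right _ _))
  have hT' : Bnd LQsh B₀ W₀ :=
    hT.mono ((le_max_right _ _).trans (le_max_right _ _))
      ((le_max_right _ _).trans (le_max_right _ _))
  set WM : ℝ := max |(M₁ : ℝ)| |(M₂ : ℝ)| + 1 with hWMdef
  have hWM0 : (0 : ℝ) ≤ WM := by positivity
  have hM1 : |(M₁ : ℝ)| ≤ WM := (le_max_left _ _).trans (le_add_of_nonneg_right zero_le_one)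
  have hM2 : |(M₂ : ℝ)| ≤ WM := (le_max_right _ _).trans (le_add_of_nonneg_right zero_le_one)
  set Wd : ℝ := WM + (W₀ + W₀) with hWddef
  have hWd0 : (0 : ℝ) ≤ Wd := by positivity
  set nP : ℝ := (LP0.length : ℝ) with hnPdef
  set nQ : ℝ := (LQ0.length : ℝ) with hnQdef
  set nS : ℝ := (LPsh.length : ℝ) with hnSdef
  set nT : ℝ := (LQsh.length : ℝ) with hnTdef
  have hnP0 : (0 : ℝ) ≤ nP := Nat.cast_nonneg _
  have hnQ0 : (0 : ℝ) ≤ nQ := Nat.cast_nonneg _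
  have hnS0 : (0 : ℝ) ≤ nS := Nat.cast_nonneg _
  have hnT0 : (0 : ℝ) ≤ nT := Nat.cast_nonneg _
  refine ⟨(nP * nQ + nS * nQ + nP * nT) * (B₀ * B₀ * Wd * Wd) +
      ((2 * WM) * ((nS * nT) * (B₀ * B₀ * (W₀ + W₀))) +
        (2 * WM) * ((nS * nT) * (B₀ * B₀ * (W₀ + W₀))) +
        (nS * nT) * (B₀ * B₀ * (W₀ + W₀) * (W₀ + W₀))), ?_⟩
  intro da db hda hdb k hk
  have hk1 : (1 : ℝ) ≤ (k : ℝ) := by exact_mod_cast hk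
  have hk0 : (0 : ℝ) ≤ (k : ℝ) := zero_le_one.trans hk1
  have hEk := Bnd_EkL M₁ M₂ k WM hWM0 hM1 hM2
  -- bounds for the big list
  have hb1 : Bnd (mulL LP0 (conjL LQ0)) (B₀ * B₀) ((k : ℝ) * Wd) :=
    (hP'.ml hQ'.cj).mono le_rfl (by nlinarith)
  have hb2 : Bnd (mulL (EkL M₁ M₂ k) (mulL LPsh (conjL LQ0))) (B₀ * B₀) ((k : ℝ) * Wd) :=
    (hEk.ml (hS'.ml hQ'.cj)).mono (le_of_eq (one_mul _)) (by nlinarith)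
  have hb3 : Bnd (mulL (conjL (EkL M₁ M₂ k)) (mulL LP0 (conjL LQsh))) (B₀ * B₀) ((k : ℝ) * Wd) :=
    (hEk.cj.ml (hP'.ml hT'.cj)).mono (le_of_eq (one_mul _)) (by nlinarith)
  have hbig : Bnd (bigL M₁ M₂ LP0 LQ0 LPsh LQsh k) (B₀ * B₀) ((k : ℝ) * Wd) :=
    (hb1.app hb2).app hb3
  have hdd : Bnd (da (db (bigL M₁ M₂ LP0 LQ0 LPsh LQsh k)))
      (B₀ * B₀ * ((k : ℝ) * Wd) * ((k : ℝ) * Wd)) ((k : ℝ) * Wd) :=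
    Bnd_d hda (Bnd_d hdb hbig)
  have hlen : ((da (db (bigL M₁ M₂ LP0 LQ0 LPsh LQsh k))).length : ℝ) ≤
      (k : ℝ) * (nP * nQ + nS * nQ + nP * nT) := by
    rw [length_d hda, length_d hdb]
    have hl : (bigL M₁ M₂ LP0 LQ0 LPsh LQsh k).length =
        LP0.length * LQ0.length + k * (LPsh.length * LQ0.length) +
          k * (LP0.length * LQsh.length) := by
      simp only [bigL, List.length_append, length_mulL, length_conjL, length_EkL]
    rw [hl, hnPdef, hnQdef, hnSdef, hnTdef]
    push_cast
    have e1 : ((LP0.length : ℝ)) * (LQ0.length : ℝ) ≤ (k : ℝ) * ((LP0.length : ℝ) * (LQ0.length : ℝ)) :=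
      le_mul_of_one_le_left (mul_nonneg (Nat.cast_nonneg _) (Nat.cast_nonneg _)) hk1
    nlinarith [e1]
  -- the TP part
  have hA : |(TP (da (db (bigL M₁ M₂ LP0 LQ0 LPsh LQsh k))) ((0 : ℝ), (0 : ℝ))).im| ≤
      ((nP * nQ + nS * nQ + nP * nT) * (B₀ * B₀ * Wd * Wd)) * (k : ℝ) ^ 3 := by
    have h1 := im_TP_le hdd ((0 : ℝ), (0 : ℝ))
    have h2 : ((da (db (bigL M₁ M₂ LP0 LQ0 LPsh LQsh k))).length : ℝ) *
        (B₀ * B₀ * ((k : ℝ) * Wd) * ((k : ℝ) * Wd)) ≤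
        ((k : ℝ) * (nP * nQ + nS * nQ + nP * nT)) *
          (B₀ * B₀ * ((k : ℝ) * Wd) * ((k : ℝ) * Wd)) := by
      refine mul_le_mul_of_nonneg_right hlen ?_
      have := mul_nonneg (mul_nonneg (mul_nonneg hB₀0 hB₀0) (mul_nonneg hk0 hWd0))
        (mul_nonneg hk0 hWd0)
      linarith
    calc |(TP (da (db (bigL M₁ M₂ LP0 LQ0 LPsh LQsh k))) ((0 : ℝ), (0 : ℝ))).im| ≤
        ((da (db (bigL M₁ M₂ LP0 LQ0 LPsh LQsh k))).length : ℝ) *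
          (B₀ * B₀ * ((k : ℝ) * Wd) * ((k : ℝ) * Wd)) := h1
      _ ≤ ((k : ℝ) * (nP * nQ + nS * nQ + nP * nT)) *
          (B₀ * B₀ * ((k : ℝ) * Wd) * ((k : ℝ) * Wd)) := h2
      _ = ((nP * nQ + nS * nQ + nP * nT) * (B₀ * B₀ * Wd * Wd)) * (k : ℝ) ^ 3 := by ring
  -- bounds for Lu and Lh
  have hLu : Bnd (LuL M₁ M₂ k) (1 * 1) ((k : ℝ) * WM + (k : ℝ) * WM) := hEk.ml hEk.cj
  have hLulen : ((LuL M₁ M₂ k).length : ℝ) = (k : ℝ) * (k : ℝ) := by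
    rw [LuL, length_mulL, length_conjL, length_EkL]
    push_cast
    ring
  have hLh : Bnd (mulL LPsh (conjL LQsh)) (B₀ * B₀) (W₀ + W₀) := hS'.ml hT'.cj
  have hLhlen : ((mulL LPsh (conjL LQsh)).length : ℝ) = nS * nT := by
    rw [length_mulL, length_conjL, hnSdef, hnTdef]
    push_cast
    ring
  -- term t2
  have ht2 : |(TP (db (LuL M₁ M₂ k)) ((0 : ℝ), (0 : ℝ))).re *
      (TP (da (mulL LPsh (conjL LQsh))) ((0 : ℝ), (0 : ℝ))).im| ≤
      ((2 * WM) * ((nS * nT) * (B₀ * B₀ * (W₀ + W₀)))) * (k : ℝ) ^ 3 := by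
    have h2a := re_TP_le (Bnd_d hdb hLu) ((0 : ℝ), (0 : ℝ))
    rw [length_d hdb, hLulen] at h2a
    have h2b := im_TP_le (Bnd_d hda hLh) ((0 : ℝ), (0 : ℝ))
    rw [length_d hda, hLhlen] at h2b
    calc |(TP (db (LuL M₁ M₂ k)) ((0 : ℝ), (0 : ℝ))).re *
        (TP (da (mulL LPsh (conjL LQsh))) ((0 : ℝ), (0 : ℝ))).im| ≤
        ((k : ℝ) * (k : ℝ) * (1 * 1 * ((k : ℝ) * WM + (k : ℝ) * WM))) *
          (nS * nT * (B₀ * B₀ * (W₀ + W₀))) := prod_bound h2a h2b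
      _ = ((2 * WM) * ((nS * nT) * (B₀ * B₀ * (W₀ + W₀)))) * (k : ℝ) ^ 3 := by ring
  -- term t3
  have ht3 : |(TP (da (LuL M₁ M₂ k)) ((0 : ℝ), (0 : ℝ))).re *
      (TP (db (mulL LPsh (conjL LQsh))) ((0 : ℝ), (0 : ℝ))).im| ≤
      ((2 * WM) * ((nS * nT) * (B₀ * B₀ * (W₀ + W₀)))) * (k : ℝ) ^ 3 := by
    have h2a := re_TP_le (Bnd_d hda hLu) ((0 : ℝ), (0 : ℝ))
    rw [length_d hda, hLulen] at h2a
    have h2b := im_TP_le (Bnd_d hdb hLh) ((0 : ℝ), (0 : ℝ))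
    rw [length_d hdb, hLhlen] at h2b
    calc |(TP (da (LuL M₁ M₂ k)) ((0 : ℝ), (0 : ℝ))).re *
        (TP (db (mulL LPsh (conjL LQsh))) ((0 : ℝ), (0 : ℝ))).im| ≤
        ((k : ℝ) * (k : ℝ) * (1 * 1 * ((k : ℝ) * WM + (k : ℝ) * WM))) *
          (nS * nT * (B₀ * B₀ * (W₀ + W₀))) := prod_bound h2a h2b
      _ = ((2 * WM) * ((nS * nT) * (B₀ * B₀ * (W₀ + W₀)))) * (k : ℝ) ^ 3 := by ring
  -- term t4
  have ht4 : |(TP (LuL M₁ M₂ k) ((0 : ℝ), (0 : ℝ))).re *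
      (TP (da (db (mulL LPsh (conjL LQsh)))) ((0 : ℝ), (0 : ℝ))).im| ≤
      ((nS * nT) * (B₀ * B₀ * (W₀ + W₀) * (W₀ + W₀))) * (k : ℝ) ^ 3 := by
    have h2a := re_TP_le hLu ((0 : ℝ), (0 : ℝ))
    rw [hLulen] at h2a
    have h2b := im_TP_le (Bnd_d hda (Bnd_d hdb hLh)) ((0 : ℝ), (0 : ℝ))
    rw [length_d hda, length_d hdb, hLhlen] at h2b
    have hstep := prod_bound h2a h2b
    have hq : (0 : ℝ) ≤ nS * nT * (B₀ * B₀ * (W₀ + W₀) * (W₀ + W₀)) := by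
      have := mul_nonneg (mul_nonneg (mul_nonneg hB₀0 hB₀0) (by linarith : (0:ℝ) ≤ W₀ + W₀))
        (by linarith : (0:ℝ) ≤ W₀ + W₀)
      exact mul_nonneg (mul_nonneg hnS0 hnT0) this
    calc |(TP (LuL M₁ M₂ k) ((0 : ℝ), (0 : ℝ))).re *
        (TP (da (db (mulL LPsh (conjL LQsh)))) ((0 : ℝ), (0 : ℝ))).im| ≤
        ((k : ℝ) * (k : ℝ) * (1 * 1)) *
          (nS * nT * (B₀ * B₀ * (W₀ + W₀) * (W₀ + W₀))) := prod_bound h2a h2b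
      _ ≤ ((nS * nT) * (B₀ * B₀ * (W₀ + W₀) * (W₀ + W₀))) * (k : ℝ) ^ 3 := by
          have hkk : (k : ℝ) * (k : ℝ) * (1 * 1) ≤ (k : ℝ) ^ 3 := by
            nlinarith [mul_nonneg (mul_nonneg hk0 hk0) (sub_nonneg.mpr hk1)]
          calc ((k : ℝ) * (k : ℝ) * (1 * 1)) *
              (nS * nT * (B₀ * B₀ * (W₀ + W₀) * (W₀ + W₀))) ≤
              (k : ℝ) ^ 3 * (nS * nT * (B₀ * B₀ * (W₀ + W₀) * (W₀ + W₀))) :=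
                mul_le_mul_of_nonneg_right hkk hq
            _ = ((nS * nT) * (B₀ * B₀ * (W₀ + W₀) * (W₀ + W₀))) * (k : ℝ) ^ 3 := by ring
  -- assemble
  rw [pP_pair]
  have hval : Gf (da (db (bigL M₁ M₂ LP0 LQ0 LPsh LQsh k)))
      [(da (db (LuL M₁ M₂ k)), mulL LPsh (conjL LQsh)),
        (db (LuL M₁ M₂ k), da (mulL LPsh (conjL LQsh))),
        (da (LuL M₁ M₂ k), db (mulL LPsh (conjL LQsh))),
        (LuL M₁ M₂ k, da (db (mulL LPsh (conjL LQsh))))] ((0 : ℝ), (0 : ℝ)) =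
      (TP (da (db (bigL M₁ M₂ LP0 LQ0 LPsh LQsh k))) ((0 : ℝ), (0 : ℝ))).im +
        (TP (db (LuL M₁ M₂ k)) ((0 : ℝ), (0 : ℝ))).re *
          (TP (da (mulL LPsh (conjL LQsh))) ((0 : ℝ), (0 : ℝ))).im +
        (TP (da (LuL M₁ M₂ k)) ((0 : ℝ), (0 : ℝ))).re *
          (TP (db (mulL LPsh (conjL LQsh))) ((0 : ℝ), (0 : ℝ))).im +
        (TP (LuL M₁ M₂ k) ((0 : ℝ), (0 : ℝ))).re *
          (TP (da (db (mulL LPsh (conjL LQsh)))) ((0 : ℝ), (0 : ℝ))).im := by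
    simp only [Gf, SP, List.map_cons, List.map_nil, List.sum_cons, List.sum_nil, hh, mul_zero]
    ring
  rw [hval]
  calc |(TP (da (db (bigL M₁ M₂ LP0 LQ0 LPsh LQsh k))) ((0 : ℝ), (0 : ℝ))).im +
        (TP (db (LuL M₁ M₂ k)) ((0 : ℝ), (0 : ℝ))).re *
          (TP (da (mulL LPsh (conjL LQsh))) ((0 : ℝ), (0 : ℝ))).im +
        (TP (da (LuL M₁ M₂ k)) ((0 : ℝ), (0 : ℝ))).re *
          (TP (db (mulL LPsh (conjL LQsh))) ((0 : ℝ), (0 : ℝ))).im +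
        (TP (LuL M₁ M₂ k) ((0 : ℝ), (0 : ℝ))).re *
          (TP (da (db (mulL LPsh (conjL LQsh)))) ((0 : ℝ), (0 : ℝ))).im| ≤
      |(TP (da (db (bigL M₁ M₂ LP0 LQ0 LPsh LQsh k))) ((0 : ℝ), (0 : ℝ))).im| +
        |(TP (db (LuL M₁ M₂ k)) ((0 : ℝ), (0 : ℝ))).re *
          (TP (da (mulL LPsh (conjL LQsh))) ((0 : ℝ), (0 : ℝ))).im| +
        |(TP (da (LuL M₁ M₂ k)) ((0 : ℝ), (0 : ℝ))).re *
          (TP (db (mulL LPsh (conjL LQsh))) ((0 : ℝ), (0 : ℝ))).im| +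
        |(TP (LuL M₁ M₂ k) ((0 : ℝ), (0 : ℝ))).re *
          (TP (da (db (mulL LPsh (conjL LQsh)))) ((0 : ℝ), (0 : ℝ))).im| :=
      abs_add4 _ _ _ _
    _ ≤ ((nP * nQ + nS * nQ + nP * nT) * (B₀ * B₀ * Wd * Wd) +
        ((2 * WM) * ((nS * nT) * (B₀ * B₀ * (W₀ + W₀))) +
          (2 * WM) * ((nS * nT) * (B₀ * B₀ * (W₀ + W₀))) +
          (nS * nT) * (B₀ * B₀ * (W₀ + W₀) * (W₀ + W₀)))) * (k : ℝ) ^ 3 := by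
      rw [add_mul, add_mul, add_mul, add_mul]
      linarith

end SOB
/-- For every multi-index `I` with `|I| = 2` there is a constant `C` with
`|D_I F_k(0,0)| ≤ C·k³` for all `k ≥ 1`. -/
theorem second_order_DI_F_bound
    (M₁ M₂ : ℤ) (X₀ : ℝ × ℝ)
    (hX₀ : ∃ m : ℤ, X₀.1 * (M₁ : ℝ) + X₀.2 * (M₂ : ℝ) = 2 * Real.pi * (m : ℝ))
    (Phat Qhat : ℕ → ℤ × ℤ → ℤ) (Psharp Qsharp : ℤ × ℤ → ℤ)
    (hPfin : ∀ k, (Function.support (Phat k)).Finite)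
    (hQfin : ∀ k, (Function.support (Qhat k)).Finite)
    (hPsfin : (Function.support Psharp).Finite)
    (hQsfin : (Function.support Qsharp).Finite)
    (hPgrowth : LinearGrowth M₁ M₂ Phat Psharp)
    (hQgrowth : LinearGrowth M₁ M₂ Qhat Qsharp)
    (F : ℕ → ℝ × ℝ → ℝ)
    (hF : ∀ (k : ℕ) (X : ℝ × ℝ),
      F k X = (trigSum (Phat k) (X₀ + X) * (starRingEnd ℂ) (trigSum (Qhat k) (X₀ + X))).im)
    (δ : ℂ)
    (hδ : δ = trigSum Psharp X₀ * trigSum (Qhat 0) X₀ - trigSum (Phat 0) X₀ * trigSum Qsharp X₀)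
    (hPreal : (trigSum Psharp X₀).im = 0)
    (hQreal : (trigSum Qsharp X₀).im = 0)
    (hδreal : δ.im = 0) :
    ∀ i₁ i₂ : ℕ, i₁ + i₂ = 2 → ∃ C : ℝ, ∀ k : ℕ, 1 ≤ k →
      |DIR i₁ i₂ (F k) (0, 0)| ≤ C * (k : ℝ) ^ 3 := by
  intro i₁ i₂ hI
  obtain ⟨m, hm⟩ := hX₀
  have hPk := SOB.growth_TP M₁ M₂ X₀ m hm Phat Psharp hPfin hPsfin hPgrowth
  have hQk := SOB.growth_TP M₁ M₂ X₀ m hm Qhat Qsharp hQfin hQsfin hQgrowth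
  set LP0 := SOB.L0 (Phat 0) (hPfin 0) X₀ with hLP0
  set LQ0 := SOB.L0 (Qhat 0) (hQfin 0) X₀ with hLQ0
  set LPsh := SOB.L0 Psharp hPsfin X₀ with hLPsh
  set LQsh := SOB.L0 Qsharp hQsfin X₀ with hLQsh
  have hFk : ∀ k, F k = SOB.Gf (SOB.bigL M₁ M₂ LP0 LQ0 LPsh LQsh k)
      [(SOB.LuL M₁ M₂ k, SOB.mulL LPsh (SOB.conjL LQsh))] := by
    intro k
    funext X
    rw [hF k X]
    exact SOB.decomp_F M₁ M₂ LP0 LQ0 LPsh LQsh k X _ _ (hPk k X) (hQk k X)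
  have h00 : X₀ + ((0 : ℝ), (0 : ℝ)) = X₀ := by
    ext <;> simp
  have hh : (SOB.TP (SOB.mulL LPsh (SOB.conjL LQsh)) ((0 : ℝ), (0 : ℝ))).im = 0 := by
    rw [SOB.TP_mul, ← SOB.TP_conj,
      show SOB.TP LPsh ((0 : ℝ), (0 : ℝ)) = trigSum Psharp X₀ from by
        rw [hLPsh, ← SOB.trigSum_eq_TP Psharp hPsfin X₀ ((0 : ℝ), (0 : ℝ)), h00],
      show SOB.TP LQsh ((0 : ℝ), (0 : ℝ)) = trigSum Qsharp X₀ from by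
        rw [hLQsh, ← SOB.trigSum_eq_TP Qsharp hQsfin X₀ ((0 : ℝ), (0 : ℝ)), h00]]
    simp [Complex.mul_im, Complex.conj_im, Complex.conj_re, hPreal, hQreal]
  obtain ⟨C, hC⟩ := SOB.main_bound M₁ M₂ LP0 LQ0 LPsh LQsh hh
  refine ⟨C, fun k hk => ?_⟩
  obtain ⟨da, db, hda, hdb, hD⟩ := SOB.DIR_cases i₁ i₂ hI
    (SOB.bigL M₁ M₂ LP0 LQ0 LPsh LQsh k) [(SOB.LuL M₁ M₂ k, SOB.mulL LPsh (SOB.conjL LQsh))]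
  rw [hFk k, hD]
  exact hC da db hda hdb k hk

end
end

section
/- Instability Proposition: For every automorphism w in Γ and each i ∈ {1, −1}, there exist odd integers r and s such that for every integer k with 1−n ≤ k ≤ n−1, the coefficient of γ_k* in the basis expansion of w(φ_i*) is congruent modulo 2n to r·(k+n) if k is odd, and to s·(k+n) if k is even. -/
noncomputable section

/-- Index type for the basis `{β₁*, β₋₁*} ∪ {γ_k* : 1−n ≤ k ≤ n−1}`:
`Sum.inl true ↔ β₁*`, `Sum.inl false ↔ β₋₁*`, `Sum.inr ⟨k,_⟩ ↔ γ_k*`. -/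
abbrev SIdx (n : ℤ) : Type := Bool ⊕ {k : ℤ // 1 - n ≤ k ∧ k ≤ n - 1}

/-- The free `ℤ`-module on the basis `{β₁*, β₋₁*} ∪ {γ_k* : 1−n ≤ k ≤ n−1}`. -/
abbrev SMod (n : ℤ) : Type := SIdx n →₀ ℤ

/-- `true ↦ 1`, `false ↦ −1`: the index `i ∈ {1,−1}` encoded by a Boolean. -/
def sgn (b : Bool) : ℤ := if b then 1 else -1

/-- The basis element `β_i*` (with `i = 1` for `b = true` and `i = −1` for `b = false`). -/
def betaStar (n : ℤ) (b : Bool) : SMod n := Finsupp.single (Sum.inl b) 1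

/-- The basis element `γ_k*` for `1−n ≤ k ≤ n−1`, and `0` otherwise (so in
particular `γ_n* = γ_{−n}* = 0`). -/
def gammaStar (n : ℤ) (k : ℤ) : SMod n :=
  if h : 1 - n ≤ k ∧ k ≤ n - 1 then Finsupp.single (Sum.inr ⟨k, h⟩) 1 else 0

/-- The `ℤ`-linear endomorphism `σ*`: `β_i* ↦ β_{−i}*`, `γ_k* ↦ γ_{−k}*`. -/
def sigmaStar (n : ℤ) : SMod n →ₗ[ℤ] SMod n :=
  Finsupp.linearCombination ℤ
    (Sum.elim (fun b => betaStar n (!b)) (fun k : {k : ℤ // 1 - n ≤ k ∧ k ≤ n - 1} =>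
      gammaStar n (-k.1)))

/-- The `ℤ`-linear endomorphism `τ_o*`: `β_i* ↦ β_i*`,
`γ_k* ↦ −γ_{k−1}* + γ_k* − γ_{k+1}*` for `k` odd and `γ_k* ↦ γ_k*` for `k` even. -/
def tauOStar (n : ℤ) : SMod n →ₗ[ℤ] SMod n :=
  Finsupp.linearCombination ℤ
    (Sum.elim (fun b => betaStar n b) (fun k : {k : ℤ // 1 - n ≤ k ∧ k ≤ n - 1} =>
      if Odd k.1 then -gammaStar n (k.1 - 1) + gammaStar n k.1 - gammaStar n (k.1 + 1)
      else gammaStar n k.1))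

/-- The `ℤ`-linear endomorphism `τ_e*`: `β_i* ↦ β_{−i}* + γ_i*`,
`γ_k* ↦ γ_k*` for `k` odd and `γ_k* ↦ −γ_{k−1}* + γ_k* − γ_{k+1}*` for `k` even. -/
def tauEStar (n : ℤ) : SMod n →ₗ[ℤ] SMod n :=
  Finsupp.linearCombination ℤ
    (Sum.elim (fun b => betaStar n (!b) + gammaStar n (sgn b))
      (fun k : {k : ℤ // 1 - n ≤ k ∧ k ≤ n - 1} =>
        if Odd k.1 then gammaStar n k.1
        else -gammaStar n (k.1 - 1) + gammaStar n k.1 - gammaStar n (k.1 + 1)))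

/-- `Γ`: the subgroup of the automorphism group of the module generated by the
automorphisms `σ*`, `τ_o*`, `τ_e*`. -/
def GammaGrp (n : ℤ) : Subgroup (SMod n ≃ₗ[ℤ] SMod n) :=
  Subgroup.closure {w : SMod n ≃ₗ[ℤ] SMod n |
    (w : SMod n →ₗ[ℤ] SMod n) = sigmaStar n ∨
    (w : SMod n →ₗ[ℤ] SMod n) = tauOStar n ∨
    (w : SMod n →ₗ[ℤ] SMod n) = tauEStar n}

/-- `φ₁* = 2n·β₁* + Σ_{k=1−n}^{0} (k+n)·γ_k* − Σ_{k=1}^{n−1} (n−k)·γ_k*` and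
`φ₋₁* = 2n·β₋₁* − Σ_{k=1−n}^{−1} (k+n)·γ_k* + n·γ₀* + Σ_{k=1}^{n−1} (n−k)·γ_k*`. -/
def phiStar (n : ℤ) (b : Bool) : SMod n :=
  if b then
    (2 * n) • betaStar n true
      + ∑ k ∈ Finset.Icc (1 - n) 0, (k + n) • gammaStar n k
      - ∑ k ∈ Finset.Icc 1 (n - 1), (n - k) • gammaStar n k
  else
    (2 * n) • betaStar n false
      - ∑ k ∈ Finset.Icc (1 - n) (-1), (k + n) • gammaStar n k
      + n • gammaStar n 0
      + ∑ k ∈ Finset.Icc 1 (n - 1), (n - k) • gammaStar n k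
namespace Instab

/-- coefficient of `γ_k*` (0 if out of range) -/
def cf (n : ℤ) (v : SMod n) (k : ℤ) : ℤ :=
  if h : 1 - n ≤ k ∧ k ≤ n - 1 then v (Sum.inr ⟨k, h⟩) else 0

lemma cf_zero (n k : ℤ) : cf n 0 k = 0 := by simp [cf]

lemma cf_add (n : ℤ) (v w : SMod n) (k : ℤ) : cf n (v + w) k = cf n v k + cf n w k := by
  unfold cf; split <;> simp

lemma cf_neg (n : ℤ) (v : SMod n) (k : ℤ) : cf n (-v) k = -cf n v k := by
  unfold cf; split <;> simp

lemma cf_sub (n : ℤ) (v w : SMod n) (k : ℤ) : cf n (v - w) k = cf n v k - cf n w k := by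
  unfold cf; split <;> simp

lemma cf_smul (n c : ℤ) (v : SMod n) (k : ℤ) : cf n (c • v) k = c * cf n v k := by
  unfold cf; split <;> simp

lemma cf_sum {ι : Type*} (n : ℤ) (s : Finset ι) (g : ι → SMod n) (k : ℤ) :
    cf n (∑ j ∈ s, g j) k = ∑ j ∈ s, cf n (g j) k := by
  classical
  induction s using Finset.cons_induction with
  | empty => simp [cf_zero]
  | cons a s ha ih => rw [Finset.sum_cons, Finset.sum_cons, cf_add, ih]

lemma cf_out (n : ℤ) (v : SMod n) {k : ℤ} (hk : ¬(1 - n ≤ k ∧ k ≤ n - 1)) :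
    cf n v k = 0 := dif_neg hk

lemma cf_beta (n : ℤ) (b : Bool) (k : ℤ) : cf n (betaStar n b) k = 0 := by
  unfold cf betaStar; split <;> simp [Finsupp.single_apply]

lemma cf_single_inl (n : ℤ) (b : Bool) (a k : ℤ) :
    cf n (Finsupp.single (Sum.inl b) a) k = 0 := by
  unfold cf; split <;> simp [Finsupp.single_apply]

lemma cf_single_inr (n : ℤ) {j : ℤ} (hj : 1 - n ≤ j ∧ j ≤ n - 1) (a k : ℤ) :
    cf n (Finsupp.single (Sum.inr ⟨j, hj⟩) a) k = if j = k then a else 0 := by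
  unfold cf
  by_cases hk : 1 - n ≤ k ∧ k ≤ n - 1
  · rw [dif_pos hk]
    simp [Finsupp.single_apply]
  · rw [dif_neg hk]
    split_ifs with h
    · exact absurd (h ▸ hj) hk
    · rfl

lemma cf_gamma (n j k : ℤ) :
    cf n (gammaStar n j) k = if j = k ∧ (1 - n ≤ k ∧ k ≤ n - 1) then 1 else 0 := by
  unfold gammaStar
  split_ifs with hj h2 h2
  · rw [cf_single_inr n hj, if_pos h2.1]
  · rw [cf_single_inr n hj, if_neg]
    intro h; exact h2 ⟨h, h ▸ hj⟩
  · exact absurd (h2.1 ▸ h2.2) hj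
  · exact cf_zero n k

lemma gamma_apply_inl (n j : ℤ) (c : Bool) : (gammaStar n j) (Sum.inl c) = 0 := by
  unfold gammaStar; split <;> simp [Finsupp.single_apply]

lemma beta_apply_inl (n : ℤ) (b c : Bool) :
    (betaStar n b) (Sum.inl c) = if b = c then 1 else 0 := by
  simp [betaStar, Finsupp.single_apply]

lemma apply_inl_sigma (n : ℤ) (v : SMod n) (c : Bool) :
    sigmaStar n v (Sum.inl c) = v (Sum.inl (!c)) := by
  induction v using Finsupp.induction_linear with
  | zero => simp
  | add f g hf hg => simp [map_add, Finsupp.add_apply, hf, hg]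
  | single a b =>
    rw [sigmaStar, Finsupp.linearCombination_single]
    cases a with
    | inl b' =>
      rw [Sum.elim_inl, Finsupp.smul_apply, beta_apply_inl]
      simp only [Finsupp.single_apply, Sum.inl.injEq]
      cases b' <;> cases c <;> simp
    | inr j =>
      rw [Sum.elim_inr, Finsupp.smul_apply, gamma_apply_inl]
      simp [Finsupp.single_apply]

lemma cf_sigma (n : ℤ) (v : SMod n) {k : ℤ} (hk : 1 - n ≤ k ∧ k ≤ n - 1) :
    cf n (sigmaStar n v) k = cf n v (-k) := by
  induction v using Finsupp.induction_linear with
  | zero => simp [cf_zero]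
  | add f g hf hg => rw [map_add, cf_add, cf_add, hf, hg]
  | single a b =>
    rw [sigmaStar, Finsupp.linearCombination_single, cf_smul]
    cases a with
    | inl b' => rw [Sum.elim_inl, cf_beta, cf_single_inl, mul_zero]
    | inr j =>
      obtain ⟨j, hj⟩ := j
      rw [Sum.elim_inr, cf_gamma, cf_single_inr]
      simp only [hk.1, hk.2, and_self, and_true]
      split_ifs <;> first | ring1 | (exfalso; omega)

lemma apply_inl_tauO (n : ℤ) (v : SMod n) (c : Bool) :
    tauOStar n v (Sum.inl c) = v (Sum.inl c) := by
  induction v using Finsupp.induction_linear with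
  | zero => simp
  | add f g hf hg => simp [map_add, Finsupp.add_apply, hf, hg]
  | single a b =>
    rw [tauOStar, Finsupp.linearCombination_single]
    cases a with
    | inl b' => rw [Sum.elim_inl, Finsupp.smul_apply, beta_apply_inl]; simp [betaStar, Finsupp.single_apply]
    | inr j =>
      rw [Sum.elim_inr, Finsupp.smul_apply]
      split_ifs <;>
        simp [gamma_apply_inl, Finsupp.single_apply, Finsupp.add_apply, Finsupp.sub_apply,
          Finsupp.neg_apply]

lemma cf_tauO (n : ℤ) (v : SMod n) {k : ℤ} (hk : 1 - n ≤ k ∧ k ≤ n - 1) :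
    cf n (tauOStar n v) k =
      if Odd k then cf n v k else cf n v k - cf n v (k - 1) - cf n v (k + 1) := by
  induction v using Finsupp.induction_linear with
  | zero => simp [cf_zero]
  | add f g hf hg =>
      rw [map_add, cf_add, hf, hg, cf_add, cf_add, cf_add]
      split_ifs <;> ring1
  | single a b =>
    rw [tauOStar, Finsupp.linearCombination_single, cf_smul]
    cases a with
    | inl b' =>
      rw [Sum.elim_inl, cf_beta, mul_zero, cf_single_inl, cf_single_inl, cf_single_inl]
      split_ifs <;> ring1
    | inr j =>
      obtain ⟨j, hj⟩ := j
      rw [Sum.elim_inr, cf_single_inr, cf_single_inr, cf_single_inr]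
      by_cases hoj : Odd j
      · rw [if_pos hoj, cf_sub, cf_add, cf_neg, cf_gamma, cf_gamma, cf_gamma]
        rw [Int.odd_iff] at hoj
        simp only [hk.1, hk.2, and_self, and_true, Int.odd_iff]
        split_ifs <;> first | ring1 | (exfalso; omega)
      · rw [if_neg hoj, cf_gamma]
        rw [Int.not_odd_iff_even, Int.even_iff] at hoj
        simp only [hk.1, hk.2, and_self, and_true, Int.odd_iff]
        split_ifs <;> first | ring1 | (exfalso; omega)

lemma apply_inl_tauE (n : ℤ) (v : SMod n) (c : Bool) :
    tauEStar n v (Sum.inl c) = v (Sum.inl (!c)) := by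
  induction v using Finsupp.induction_linear with
  | zero => simp
  | add f g hf hg => simp [map_add, Finsupp.add_apply, hf, hg]
  | single a b =>
    rw [tauEStar, Finsupp.linearCombination_single]
    cases a with
    | inl b' =>
      rw [Sum.elim_inl, Finsupp.smul_apply, Finsupp.add_apply, gamma_apply_inl, beta_apply_inl]
      simp only [Finsupp.single_apply, Sum.inl.injEq]
      cases b' <;> cases c <;> simp
    | inr j =>
      rw [Sum.elim_inr, Finsupp.smul_apply]
      split_ifs <;>
        simp [gamma_apply_inl, Finsupp.single_apply, Finsupp.add_apply, Finsupp.sub_apply,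
          Finsupp.neg_apply]

lemma cf_tauE (n : ℤ) (v : SMod n) {k : ℤ} (hk : 1 - n ≤ k ∧ k ≤ n - 1) :
    cf n (tauEStar n v) k =
      if Odd k then cf n v k - cf n v (k - 1) - cf n v (k + 1)
          + (if k = 1 then v (Sum.inl true) else 0)
          + (if k = -1 then v (Sum.inl false) else 0)
      else cf n v k := by
  induction v using Finsupp.induction_linear with
  | zero => simp [cf_zero]
  | add f g hf hg =>
      rw [map_add, cf_add, hf, hg, cf_add, cf_add, cf_add, Finsupp.add_apply, Finsupp.add_apply]
      split_ifs <;> ring1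
  | single a b =>
    rw [tauEStar, Finsupp.linearCombination_single, cf_smul]
    cases a with
    | inl c =>
      rw [Sum.elim_inl, cf_add, cf_beta, cf_gamma, cf_single_inl, cf_single_inl, cf_single_inl]
      simp only [Finsupp.single_apply, Sum.inl.injEq, sgn, hk.1, hk.2, and_self, and_true,
        Int.odd_iff]
      cases c <;> simp only [if_true, if_false, Bool.true_eq_false, Bool.false_eq_true] <;>
        split_ifs <;> first | ring1 | (exfalso; omega)
    | inr j =>
      obtain ⟨j, hj⟩ := j
      rw [Sum.elim_inr, cf_single_inr, cf_single_inr, cf_single_inr]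
      simp only [Finsupp.single_apply, Sum.inr.injEq]
      by_cases hoj : Odd j
      · rw [if_pos hoj, cf_gamma]
        rw [Int.odd_iff] at hoj
        simp only [hk.1, hk.2, and_self, and_true, Int.odd_iff, reduceCtorEq, if_false]
        split_ifs <;> first | ring1 | (exfalso; omega)
      · rw [if_neg hoj, cf_sub, cf_add, cf_neg, cf_gamma, cf_gamma, cf_gamma]
        rw [Int.not_odd_iff_even, Int.even_iff] at hoj
        simp only [hk.1, hk.2, and_self, and_true, Int.odd_iff, reduceCtorEq, if_false]
        split_ifs <;> first | ring1 | (exfalso; omega)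

lemma cf_tauO_odd (n : ℤ) (v : SMod n) {j : ℤ} (hoj : Odd j) :
    cf n (tauOStar n v) j = cf n v j := by
  by_cases h : 1 - n ≤ j ∧ j ≤ n - 1
  · rw [cf_tauO n v h, if_pos hoj]
  · rw [cf_out n _ h, cf_out n _ h]

lemma cf_tauE_even (n : ℤ) (v : SMod n) {j : ℤ} (hej : Even j) :
    cf n (tauEStar n v) j = cf n v j := by
  by_cases h : 1 - n ≤ j ∧ j ≤ n - 1
  · rw [cf_tauE n v h, if_neg (Int.not_odd_iff_even.mpr hej)]
  · rw [cf_out n _ h, cf_out n _ h]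

/-- The invariant. -/
def P (n : ℤ) (v : SMod n) : Prop :=
  ∃ r s : ℤ, Odd r ∧ Odd s ∧
    (2 * n ∣ v (Sum.inl true)) ∧ (2 * n ∣ v (Sum.inl false)) ∧
    ∀ k : ℤ, -n ≤ k → k ≤ n →
      (Odd k → 2 * n ∣ r * (k + n) - cf n v k) ∧
      (Even k → 2 * n ∣ s * (k + n) - cf n v k)

lemma bdry (n r : ℤ) {k : ℤ} (h : k = -n ∨ k = n) : 2 * n ∣ r * (k + n) := by
  rcases h with h | h <;> subst h
  · exact ⟨0, by ring⟩
  · exact ⟨r, by ring⟩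

lemma odd_pred {k : ℤ} (h : Even k) : Odd (k - 1) := by
  rcases h with ⟨t, ht⟩; exact ⟨t - 1, by omega⟩

lemma odd_succ {k : ℤ} (h : Even k) : Odd (k + 1) := by
  rcases h with ⟨t, ht⟩; exact ⟨t, by omega⟩

lemma even_pred {k : ℤ} (h : Odd k) : Even (k - 1) := by
  rcases h with ⟨t, ht⟩; exact ⟨t, by omega⟩

lemma even_succ {k : ℤ} (h : Odd k) : Even (k + 1) := by
  rcases h with ⟨t, ht⟩; exact ⟨t + 1, by omega⟩

lemma P_sigma (n : ℤ) (hn : 2 ≤ n) (v : SMod n) (h : P n v) : P n (sigmaStar n v) := by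
  obtain ⟨r, s, hr, hs, hb1, hb2, hγ⟩ := h
  refine ⟨-r, -s, hr.neg, hs.neg, ?_, ?_, fun k hk1 hk2 => ?_⟩
  · rw [apply_inl_sigma]; exact hb2
  · rw [apply_inl_sigma]; exact hb1
  by_cases hkr : 1 - n ≤ k ∧ k ≤ n - 1
  · rw [cf_sigma n v hkr]
    constructor
    · intro hko
      obtain ⟨c, hc⟩ := (hγ (-k) (by omega) (by omega)).1 hko.neg
      exact ⟨c - r, by linear_combination hc⟩
    · intro hke
      obtain ⟨c, hc⟩ := (hγ (-k) (by omega) (by omega)).2 hke.neg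
      exact ⟨c - s, by linear_combination hc⟩
  · rw [cf_out n _ hkr]
    have hb : k = -n ∨ k = n := by omega
    constructor <;> intro _ <;> rw [sub_zero] <;> exact bdry n _ hb

lemma P_sigma_rev (n : ℤ) (hn : 2 ≤ n) (v : SMod n) (h : P n (sigmaStar n v)) : P n v := by
  obtain ⟨r, s, hr, hs, hb1, hb2, hγ⟩ := h
  rw [apply_inl_sigma] at hb1 hb2
  simp only [Bool.not_true, Bool.not_false] at hb1 hb2
  refine ⟨-r, -s, hr.neg, hs.neg, hb2, hb1, fun k hk1 hk2 => ?_⟩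
  by_cases hkr : 1 - n ≤ k ∧ k ≤ n - 1
  · have hsk : cf n (sigmaStar n v) (-k) = cf n v k := by
      rw [cf_sigma n v (by omega : 1 - n ≤ -k ∧ -k ≤ n - 1), neg_neg]
    constructor
    · intro hko
      obtain ⟨c, hc⟩ := (hγ (-k) (by omega) (by omega)).1 hko.neg
      rw [hsk] at hc
      exact ⟨c - r, by linear_combination hc⟩
    · intro hke
      obtain ⟨c, hc⟩ := (hγ (-k) (by omega) (by omega)).2 hke.neg
      rw [hsk] at hc
      exact ⟨c - s, by linear_combination hc⟩
  · rw [cf_out n _ hkr]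
    have hb : k = -n ∨ k = n := by omega
    constructor <;> intro _ <;> rw [sub_zero] <;> exact bdry n _ hb

lemma P_tauO (n : ℤ) (hn : 2 ≤ n) (v : SMod n) (h : P n v) : P n (tauOStar n v) := by
  obtain ⟨r, s, hr, hs, hb1, hb2, hγ⟩ := h
  refine ⟨r, s - 2 * r, hr, by rcases hs with ⟨t, ht⟩; exact ⟨t - r, by omega⟩,
    ?_, ?_, fun k hk1 hk2 => ?_⟩
  · rw [apply_inl_tauO]; exact hb1
  · rw [apply_inl_tauO]; exact hb2
  by_cases hkr : 1 - n ≤ k ∧ k ≤ n - 1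
  · rw [cf_tauO n v hkr]
    constructor
    · intro hko
      rw [if_pos hko]
      exact (hγ k hk1 hk2).1 hko
    · intro hke
      rw [if_neg (Int.not_odd_iff_even.mpr hke)]
      obtain ⟨a, ha⟩ := (hγ k hk1 hk2).2 hke
      obtain ⟨c, hc⟩ := (hγ (k - 1) (by omega) (by omega)).1 (odd_pred hke)
      obtain ⟨d, hd⟩ := (hγ (k + 1) (by omega) (by omega)).1 (odd_succ hke)
      exact ⟨a - c - d, by linear_combination ha - hc - hd⟩
  · rw [cf_out n _ hkr]
    have hb : k = -n ∨ k = n := by omega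
    constructor <;> intro _ <;> rw [sub_zero] <;> exact bdry n _ hb

lemma P_tauO_rev (n : ℤ) (hn : 2 ≤ n) (v : SMod n) (h : P n (tauOStar n v)) : P n v := by
  obtain ⟨r, s, hr, hs, hb1, hb2, hγ⟩ := h
  rw [apply_inl_tauO] at hb1 hb2
  refine ⟨r, s + 2 * r, hr, by rcases hs with ⟨t, ht⟩; exact ⟨t + r, by omega⟩,
    hb1, hb2, fun k hk1 hk2 => ?_⟩
  by_cases hkr : 1 - n ≤ k ∧ k ≤ n - 1
  · constructor
    · intro hko
      have := (hγ k hk1 hk2).1 hko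
      rwa [cf_tauO_odd n v hko] at this
    · intro hke
      have heq : cf n (tauOStar n v) k
          = cf n v k - cf n (tauOStar n v) (k - 1) - cf n (tauOStar n v) (k + 1) := by
        rw [cf_tauO n v hkr, if_neg (Int.not_odd_iff_even.mpr hke),
          cf_tauO_odd n v (odd_pred hke), cf_tauO_odd n v (odd_succ hke)]
      obtain ⟨a, ha⟩ := (hγ k hk1 hk2).2 hke
      obtain ⟨c, hc⟩ := (hγ (k - 1) (by omega) (by omega)).1 (odd_pred hke)
      obtain ⟨d, hd⟩ := (hγ (k + 1) (by omega) (by omega)).1 (odd_succ hke)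
      rw [heq] at ha
      exact ⟨a + c + d, by linear_combination ha + hc + hd⟩
  · rw [cf_out n _ hkr]
    have hb : k = -n ∨ k = n := by omega
    constructor <;> intro _ <;> rw [sub_zero] <;> exact bdry n _ hb

lemma P_tauE (n : ℤ) (hn : 2 ≤ n) (v : SMod n) (h : P n v) : P n (tauEStar n v) := by
  obtain ⟨r, s, hr, hs, hb1, hb2, hγ⟩ := h
  refine ⟨r - 2 * s, s, by rcases hr with ⟨t, ht⟩; exact ⟨t - s, by omega⟩, hs,
    ?_, ?_, fun k hk1 hk2 => ?_⟩
  · rw [apply_inl_tauE]; exact hb2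
  · rw [apply_inl_tauE]; exact hb1
  by_cases hkr : 1 - n ≤ k ∧ k ≤ n - 1
  · rw [cf_tauE n v hkr]
    constructor
    · intro hko
      rw [if_pos hko]
      obtain ⟨a, ha⟩ := (hγ k hk1 hk2).1 hko
      obtain ⟨c, hc⟩ := (hγ (k - 1) (by omega) (by omega)).2 (even_pred hko)
      obtain ⟨d, hd⟩ := (hγ (k + 1) (by omega) (by omega)).2 (even_succ hko)
      obtain ⟨e1, he1⟩ : 2 * n ∣ (if k = 1 then v (Sum.inl true) else 0) := by
        split_ifs; exacts [hb1, dvd_zero _]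
      obtain ⟨e2, he2⟩ : 2 * n ∣ (if k = -1 then v (Sum.inl false) else 0) := by
        split_ifs; exacts [hb2, dvd_zero _]
      exact ⟨a - c - d - e1 - e2, by linear_combination ha - hc - hd - he1 - he2⟩
    · intro hke
      rw [if_neg (Int.not_odd_iff_even.mpr hke)]
      exact (hγ k hk1 hk2).2 hke
  · rw [cf_out n _ hkr]
    have hb : k = -n ∨ k = n := by omega
    constructor <;> intro _ <;> rw [sub_zero] <;> exact bdry n _ hb

lemma P_tauE_rev (n : ℤ) (hn : 2 ≤ n) (v : SMod n) (h : P n (tauEStar n v)) : P n v := by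
  obtain ⟨r, s, hr, hs, hb1, hb2, hγ⟩ := h
  rw [apply_inl_tauE] at hb1 hb2
  simp only [Bool.not_true, Bool.not_false] at hb1 hb2
  refine ⟨r + 2 * s, s, by rcases hr with ⟨t, ht⟩; exact ⟨t + s, by omega⟩, hs,
    hb2, hb1, fun k hk1 hk2 => ?_⟩
  by_cases hkr : 1 - n ≤ k ∧ k ≤ n - 1
  · constructor
    · intro hko
      have heq : cf n (tauEStar n v) k
          = cf n v k - cf n (tauEStar n v) (k - 1) - cf n (tauEStar n v) (k + 1)
            + (if k = 1 then v (Sum.inl true) else 0)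
            + (if k = -1 then v (Sum.inl false) else 0) := by
        rw [cf_tauE n v hkr, if_pos hko,
          cf_tauE_even n v (even_pred hko), cf_tauE_even n v (even_succ hko)]
      obtain ⟨a, ha⟩ := (hγ k hk1 hk2).1 hko
      obtain ⟨c, hc⟩ := (hγ (k - 1) (by omega) (by omega)).2 (even_pred hko)
      obtain ⟨d, hd⟩ := (hγ (k + 1) (by omega) (by omega)).2 (even_succ hko)
      obtain ⟨e1, he1⟩ : 2 * n ∣ (if k = 1 then v (Sum.inl true) else 0) := by
        split_ifs; exacts [hb2, dvd_zero _]
      obtain ⟨e2, he2⟩ : 2 * n ∣ (if k = -1 then v (Sum.inl false) else 0) := by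
        split_ifs; exacts [hb1, dvd_zero _]
      rw [heq] at ha
      exact ⟨a + c + d + e1 + e2, by linear_combination ha + hc + hd + he1 + he2⟩
    · intro hke
      have := (hγ k hk1 hk2).2 hke
      rwa [cf_tauE_even n v hke] at this
  · rw [cf_out n _ hkr]
    have hb : k = -n ∨ k = n := by omega
    constructor <;> intro _ <;> rw [sub_zero] <;> exact bdry n _ hb

lemma gsum_apply_inl (n : ℤ) (s : Finset ℤ) (f : ℤ → ℤ) (c : Bool) :
    (∑ j ∈ s, f j • gammaStar n j) (Sum.inl c) = 0 := by
  rw [Finsupp.finset_sum_apply]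
  exact Finset.sum_eq_zero fun j _ => by rw [Finsupp.smul_apply, gamma_apply_inl, smul_zero]

lemma cf_gsum (n : ℤ) (s : Finset ℤ) (f : ℤ → ℤ) (k : ℤ) :
    cf n (∑ j ∈ s, f j • gammaStar n j) k
      = if k ∈ s ∧ (1 - n ≤ k ∧ k ≤ n - 1) then f k else 0 := by
  rw [cf_sum]
  simp only [cf_smul, cf_gamma, mul_ite, mul_one, mul_zero]
  by_cases hk : 1 - n ≤ k ∧ k ≤ n - 1
  · simp only [hk, and_true]
    rw [Finset.sum_ite_eq' s k f]
  · rw [if_neg (fun hc => hk hc.2)]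
    exact Finset.sum_eq_zero fun j _ => if_neg (fun hc => hk hc.2)

lemma P_phi (n : ℤ) (hn : 2 ≤ n) (b : Bool) : P n (phiStar n b) := by
  cases b
  · -- b = false
    rw [phiStar, if_neg (by simp)]
    refine ⟨-1, -1, ⟨-1, by ring⟩, ⟨-1, by ring⟩, ?_, ?_, fun k hk1 hk2 => ?_⟩
    · rw [Finsupp.add_apply, Finsupp.add_apply, Finsupp.sub_apply, Finsupp.smul_apply,
        Finsupp.smul_apply, beta_apply_inl, gamma_apply_inl, gsum_apply_inl, gsum_apply_inl]
      simp
    · rw [Finsupp.add_apply, Finsupp.add_apply, Finsupp.sub_apply, Finsupp.smul_apply,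
        Finsupp.smul_apply, beta_apply_inl, gamma_apply_inl, gsum_apply_inl, gsum_apply_inl]
      exact ⟨1, by simp⟩
    have hcf : cf n ((2 * n) • betaStar n false
        - ∑ j ∈ Finset.Icc (1 - n) (-1), (j + n) • gammaStar n j
        + n • gammaStar n 0
        + ∑ j ∈ Finset.Icc 1 (n - 1), (n - j) • gammaStar n j) k
        = -(if k ∈ Finset.Icc (1 - n) (-1) ∧ (1 - n ≤ k ∧ k ≤ n - 1) then k + n else 0)
          + n * (if 0 = k ∧ (1 - n ≤ k ∧ k ≤ n - 1) then 1 else 0)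
          + (if k ∈ Finset.Icc 1 (n - 1) ∧ (1 - n ≤ k ∧ k ≤ n - 1) then n - k else 0) := by
      rw [cf_add, cf_add, cf_sub, cf_smul, cf_smul, cf_beta, cf_gamma, cf_gsum, cf_gsum]
      ring
    have key : 2 * n ∣ -1 * (k + n) - cf n ((2 * n) • betaStar n false
        - ∑ j ∈ Finset.Icc (1 - n) (-1), (j + n) • gammaStar n j
        + n • gammaStar n 0
        + ∑ j ∈ Finset.Icc 1 (n - 1), (n - j) • gammaStar n j) k := by
      rw [hcf]
      simp only [Finset.mem_Icc]
      split_ifs <;>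
        first
          | (exfalso; omega)
          | exact ⟨0, by omega⟩
          | exact ⟨1, by omega⟩
          | exact ⟨-1, by omega⟩
          | (rcases (show k = -n ∨ k = n by omega) with rfl | rfl <;>
              first
                | exact ⟨0, by omega⟩
                | exact ⟨1, by omega⟩
                | exact ⟨-1, by omega⟩)
    exact ⟨fun _ => key, fun _ => key⟩
  · -- b = true
    rw [phiStar, if_pos rfl]
    refine ⟨1, 1, odd_one, odd_one, ?_, ?_, fun k hk1 hk2 => ?_⟩
    · rw [Finsupp.sub_apply, Finsupp.add_apply, Finsupp.smul_apply, beta_apply_inl,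
        gsum_apply_inl, gsum_apply_inl]
      exact ⟨1, by simp⟩
    · rw [Finsupp.sub_apply, Finsupp.add_apply, Finsupp.smul_apply, beta_apply_inl,
        gsum_apply_inl, gsum_apply_inl]
      simp
    have hcf : cf n ((2 * n) • betaStar n true
        + ∑ j ∈ Finset.Icc (1 - n) 0, (j + n) • gammaStar n j
        - ∑ j ∈ Finset.Icc 1 (n - 1), (n - j) • gammaStar n j) k
        = (if k ∈ Finset.Icc (1 - n) 0 ∧ (1 - n ≤ k ∧ k ≤ n - 1) then k + n else 0)
          - (if k ∈ Finset.Icc 1 (n - 1) ∧ (1 - n ≤ k ∧ k ≤ n - 1) then n - k else 0) := by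
      rw [cf_sub, cf_add, cf_smul, cf_beta, cf_gsum, cf_gsum]
      ring
    have key : 2 * n ∣ 1 * (k + n) - cf n ((2 * n) • betaStar n true
        + ∑ j ∈ Finset.Icc (1 - n) 0, (j + n) • gammaStar n j
        - ∑ j ∈ Finset.Icc 1 (n - 1), (n - j) • gammaStar n j) k := by
      rw [hcf]
      simp only [Finset.mem_Icc]
      split_ifs <;>
        first
          | (exfalso; omega)
          | exact ⟨0, by omega⟩
          | exact ⟨1, by omega⟩
          | exact ⟨-1, by omega⟩
          | (rcases (show k = -n ∨ k = n by omega) with rfl | rfl <;>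
              first
                | exact ⟨0, by omega⟩
                | exact ⟨1, by omega⟩
                | exact ⟨-1, by omega⟩)
    exact ⟨fun _ => key, fun _ => key⟩

lemma P_iff (n : ℤ) (hn : 2 ≤ n) (w : SMod n ≃ₗ[ℤ] SMod n) (hw : w ∈ GammaGrp n) :
    ∀ v : SMod n, P n v ↔ P n (w v) := by
  induction hw using Subgroup.closure_induction with
  | mem x hx =>
    intro v
    rcases hx with h | h | h
    · have hx : x v = sigmaStar n v := by rw [← LinearEquiv.coe_coe, h]
      rw [hx]
      exact ⟨P_sigma n hn v, P_sigma_rev n hn v⟩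
    · have hx : x v = tauOStar n v := by rw [← LinearEquiv.coe_coe, h]
      rw [hx]
      exact ⟨P_tauO n hn v, P_tauO_rev n hn v⟩
    · have hx : x v = tauEStar n v := by rw [← LinearEquiv.coe_coe, h]
      rw [hx]
      exact ⟨P_tauE n hn v, P_tauE_rev n hn v⟩
  | one => intro v; rfl
  | mul x y hx hy ihx ihy =>
    intro v
    have : (x * y) v = x (y v) := rfl
    rw [this, ihy v, ihx (y v)]
  | inv x hx ih =>
    intro v
    have h2 : x (x⁻¹ v) = v := x.apply_symm_apply v
    have := ih (x⁻¹ v)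
    rw [h2] at this
    exact this.symm

end Instab

/-- **Instability Proposition.** For every automorphism `w ∈ Γ` and each
`i ∈ {1,−1}`, there are odd integers `r, s` such that for every `k` with
`1−n ≤ k ≤ n−1`, the coefficient of `γ_k*` in `w(φ_i*)` is congruent mod `2n`
to `r·(k+n)` if `k` is odd and to `s·(k+n)` if `k` is even. -/
theorem instability_proposition (n : ℤ) (hn : 2 ≤ n)
    (w : SMod n ≃ₗ[ℤ] SMod n) (hw : w ∈ GammaGrp n) (b : Bool) :
    ∃ r s : ℤ, Odd r ∧ Odd s ∧
      ∀ (k : ℤ) (hk : 1 - n ≤ k ∧ k ≤ n - 1),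
        (Odd k → (w (phiStar n b)) (Sum.inr ⟨k, hk⟩) ≡ r * (k + n) [ZMOD (2 * n)]) ∧
        (Even k → (w (phiStar n b)) (Sum.inr ⟨k, hk⟩) ≡ s * (k + n) [ZMOD (2 * n)]) := by
  obtain ⟨r, s, hr, hs, _, _, hγ⟩ :=
      (Instab.P_iff n hn w hw (phiStar n b)).1 (Instab.P_phi n hn b)
  refine ⟨r, s, hr, hs, fun k hk => ?_⟩
  have hcf : Instab.cf n (w (phiStar n b)) k = (w (phiStar n b)) (Sum.inr ⟨k, hk⟩) :=
    dif_pos hk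
  have h := hγ k (by omega) (by omega)
  constructor
  · intro hko
    have hd := h.1 hko
    rw [hcf] at hd
    exact Int.modEq_iff_dvd.mpr hd
  · intro hke
    have hd := h.2 hke
    rw [hcf] at hd
    exact Int.modEq_iff_dvd.mpr hd

end
end
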